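/- If X is (ω^d·(min X + 1), k, i)-persistent, then X is (ω^{d+1}, k, i)-persistent. -/

import Mathlib

open Finset

/-- Minimum of a finite set of naturals (0 for the empty set). -/
def fmin (X : Finset ℕ) : ℕ := X.min.untopD 0

/-- Maximum of a finite set of naturals (0 for the empty set). -/
def fmax (X : Finset ℕ) : ℕ := X.max.unbotD 0

/-- `OmegaLarge d X` : `X` is ω^d-large (for `d ≥ 1`; `OmegaLarge 0` means nonempty).
`X` is ω^{d+1}-large iff `X = {min X} ∪ ⋃_{m < min X} X_m` where the `X_m` form a
stack (each max below the next min) of ω^d-large sets all above `min X`. -/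
def OmegaLarge : ℕ → Finset ℕ → Prop
  | 0, X => X.Nonempty
  | d+1, X => X.Nonempty ∧ ∃ f : ℕ → Finset ℕ,
      (∀ m < fmin X, OmegaLarge d (f m)) ∧
      (∀ m, m + 1 < fmin X → fmax (f m) < fmin (f (m+1))) ∧
      (∀ m < fmin X, fmin X < fmin (f m)) ∧
      X = insert (fmin X) ((Finset.range (fmin X)).biUnion f)

/-- `OmegaMulLarge d n X` : `X` is ω^d·n-large, i.e. a union of a stack of `n`
ω^d-large sets. -/
def OmegaMulLarge (d n : ℕ) (X : Finset ℕ) : Prop :=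
  ∃ f : ℕ → Finset ℕ,
    (∀ m < n, OmegaLarge d (f m)) ∧
    (∀ m, m + 1 < n → fmax (f m) < fmin (f (m+1))) ∧
    X = (Finset.range n).biUnion f

/-- A (finite) binary tree: a set of binary strings closed under initial segments. -/
def IsTree (T : Finset (List Bool)) : Prop :=
  ∀ σ ∈ T, ∀ τ : List Bool, τ <+: σ → τ ∈ T

/-- `level T x` is `T ∩ 2^x`, the set of strings in `T` of length `x`. -/
def level (T : Finset (List Bool)) (x : ℕ) : Finset (List Bool) :=
  T.filter (fun σ => σ.length = x)

/-- Two strings are compatible if one is an initial segment of the other. -/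
def Compat (σ τ : List Bool) : Prop := σ <+: τ ∨ τ <+: σ

instance (σ τ : List Bool) : Decidable (Compat σ τ) := by
  unfold Compat; infer_instance

/-- `T_ρ` : the elements of `T` compatible with `ρ`. -/
def Tsub (T : Finset (List Bool)) (ρ : List Bool) : Finset (List Bool) :=
  T.filter (fun σ => Compat σ ρ)

/-- `x` and `z` are consecutive elements of `X`. -/
def Consec (X : Finset ℕ) (x z : ℕ) : Prop :=
  x ∈ X ∧ z ∈ X ∧ x < z ∧ ∀ y ∈ X, y ≤ x ∨ z ≤ y

/-- `T` is `X`-quasistrong: `T` is a tree meeting every level in `X`, and every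
node at a level of `X` has exactly two (necessarily incompatible) extensions at
the next level of `X`. -/
def QuasiStrong (X : Finset ℕ) (T : Finset (List Bool)) : Prop :=
  IsTree T ∧ (∀ x ∈ X, (level T x).Nonempty) ∧
  ∀ x z, Consec X x z → ∀ σ ∈ level T x,
    ((level T z).filter (fun τ => σ <+: τ)).card = 2

/-- `σ` is a leaf (maximal element) of `S`. -/
def IsLeaf (S : Finset (List Bool)) (σ : List Bool) : Prop :=
  σ ∈ S ∧ ∀ τ ∈ S, σ <+: τ → τ = σ

/-- `S` is `(C,Y)`-prehomogeneous for color `c`. -/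
def PrehomFor (C : List Bool → ℕ) (Y : Finset ℕ) (S : Finset (List Bool)) (c : ℕ) : Prop :=
  ∀ x z, Consec Y x z → ∀ σ ∈ level S x, ∀ τ ∈ level S z, σ <+: τ →
    ∃ ζ ∈ S, σ <+: ζ ∧ ζ <+: τ ∧ C ζ = c

/-- `S` is `(C,Y)`-prehomogeneous (for some color). -/
def Prehom (C : List Bool → ℕ) (Y : Finset ℕ) (S : Finset (List Bool)) : Prop :=
  ∃ c, PrehomFor C Y S c

/-- The main clause of persistence: for every `X`-quasistrong tree `T` and every
`k`-coloring `C` of the leaves `T ∩ 2^{max X}`, there are a color `c < k` and a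
`Y`-quasistrong subtree `S ⊆ T` each of whose leaves has an extension in `C⁻¹(c)`. -/
def PersClause (k : ℕ) (X Y : Finset ℕ) : Prop :=
  ∀ T : Finset (List Bool), QuasiStrong X T →
    ∀ C : List Bool → ℕ, (∀ σ ∈ level T (fmax X), C σ < k) →
      ∃ c < k, ∃ S ⊆ T, QuasiStrong Y S ∧
        ∀ σ, IsLeaf S σ → ∃ τ ∈ level T (fmax X), σ <+: τ ∧ C τ = c

/-- `Persistent d n k i X` : `X` is `(ω^d·n, k, i)`-persistent. -/
def Persistent (d n k : ℕ) : ℕ → Finset ℕ → Prop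
  | 0, X => OmegaMulLarge d n X
  | i+1, X => ∃ Y, Y ⊆ X ∧ Persistent d n k i Y ∧ PersClause k X Y

/-- `SuperPersistent d n k i X` : `X` is `(ω^d·n, k, i)`-superpersistent. -/
def SuperPersistent (d n k i : ℕ) (X : Finset ℕ) : Prop :=
  ∀ T : List Bool → Finset (List Bool),
    (∀ ρ : List Bool, ρ.length = fmin X →
      QuasiStrong X (T ρ) ∧ ∀ σ ∈ T ρ, Compat σ ρ) →
    ∀ C : List Bool → ℕ, (∀ σ, C σ < k) →
      ∃ Y ⊆ X, Persistent d n k i Y ∧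
        ∀ ρ : List Bool, ρ.length = fmin X →
          ∃ S ⊆ T ρ, QuasiStrong Y S ∧ Prehom C Y S

/-- `eOf δ` : the least integer `e` with `2^{-e} < δ`. -/
noncomputable def eOf (δ : ℚ) : ℕ := sInf {e : ℕ | (2:ℚ) ^ (-(e:ℤ)) < δ}

/-- The Kučera–Gács coding bound `g(m,δ) = (m-1)e + m(m-1)/2`. -/
noncomputable def gKG (m : ℕ) (δ : ℚ) : ℕ := (m-1) * eOf δ + m*(m-1)/2

/-- `ḡ(x,k,i)`: iterated Kučera–Gács bound. -/
noncomputable def gbar (x k : ℕ) : ℕ → ℕ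
  | 0 => x + k + 1
  | i+1 => gKG (gbar x k i) (1/(k:ℚ))

/-- `h(ℓ,m,δ) = 2^{eℓ·2^{5m}}` where `e` is least with `2^{-e} < δ`. -/
noncomputable def hFun (l m : ℕ) (δ : ℚ) : ℕ := 2 ^ (eOf δ * l * 2 ^ (5*m))

/-- `h̄(x,n,k) = h(2^x, n, 1/k)·k^{2^x}`. -/
noncomputable def hbar (x n k : ℕ) : ℕ := hFun (2^x) n (1/(k:ℚ)) * k^(2^x)

/-- `expIter n x = exp^n(x)` where `exp(x) = 2^x`. -/
def expIter : ℕ → ℕ → ℕ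
  | 0, x => x
  | n+1, x => 2 ^ (expIter n x)

/- ===================== Auxiliary development ===================== -/

set_option maxHeartbeats 1000000

section Aux

open List

/- ===== A: fmin / fmax utilities ===== -/

lemma fmin_eq_min' {X : Finset ℕ} (h : X.Nonempty) : fmin X = X.min' h := by
  have : X.min = (X.min' h : WithTop ℕ) := (Finset.coe_min' h).symm
  rw [fmin, this]; rfl

lemma fmax_eq_max' {X : Finset ℕ} (h : X.Nonempty) : fmax X = X.max' h := by
  have : X.max = (X.max' h : WithBot ℕ) := (Finset.coe_max' h).symm
  rw [fmax, this]; rfl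

lemma fmin_mem {X : Finset ℕ} (h : X.Nonempty) : fmin X ∈ X := by
  rw [fmin_eq_min' h]; exact X.min'_mem h

lemma fmax_mem {X : Finset ℕ} (h : X.Nonempty) : fmax X ∈ X := by
  rw [fmax_eq_max' h]; exact X.max'_mem h

lemma fmin_le {X : Finset ℕ} {x : ℕ} (hx : x ∈ X) : fmin X ≤ x := by
  rw [fmin_eq_min' ⟨x, hx⟩]; exact Finset.min'_le X x hx

lemma le_fmax {X : Finset ℕ} {x : ℕ} (hx : x ∈ X) : x ≤ fmax X := by
  rw [fmax_eq_max' ⟨x, hx⟩]; exact Finset.le_max' X x hx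

lemma lt_fmin {X : Finset ℕ} (h : X.Nonempty) {t : ℕ} (H : ∀ x ∈ X, t < x) : t < fmin X :=
  H _ (fmin_mem h)

lemma fmax_lt {X : Finset ℕ} {t : ℕ} (ht : 0 < t) (H : ∀ x ∈ X, x < t) : fmax X < t := by
  rcases X.eq_empty_or_nonempty with rfl | h
  · have : fmax (∅ : Finset ℕ) = 0 := rfl
    omega
  · exact H _ (fmax_mem h)

lemma fmin_insert {a : ℕ} {B : Finset ℕ} (h : ∀ b ∈ B, a ≤ b) : fmin (insert a B) = a := by
  have h1 : fmin (insert a B) ≤ a := fmin_le (mem_insert_self a B)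
  have h2 : a ≤ fmin (insert a B) := by
    have hm := fmin_mem (X := insert a B) ⟨a, mem_insert_self a B⟩
    rcases mem_insert.1 hm with h' | h'
    · omega
    · exact h _ h'
  omega

lemma fmax_insert' {a : ℕ} {B : Finset ℕ} (hB : B.Nonempty) (h : a ≤ fmax B) :
    fmax (insert a B) = fmax B := by
  have h1 : fmax B ≤ fmax (insert a B) := le_fmax (mem_insert_of_mem (fmax_mem hB))
  have h2 : fmax (insert a B) ≤ fmax B := by
    have hm := fmax_mem (X := insert a B) ⟨a, mem_insert_self a B⟩
    rcases mem_insert.1 hm with h' | h'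
    · omega
    · exact le_fmax h'
  omega

lemma fmin_le_fmin {X Y : Finset ℕ} (hYX : Y ⊆ X) (hY : Y.Nonempty) : fmin X ≤ fmin Y :=
  fmin_le (hYX (fmin_mem hY))

lemma fmax_le_fmax {X Y : Finset ℕ} (hYX : Y ⊆ X) (hY : Y.Nonempty) : fmax Y ≤ fmax X :=
  le_fmax (hYX (fmax_mem hY))

lemma lt_of_mem_erase_fmin {Y : Finset ℕ} {x : ℕ} (hx : x ∈ Y.erase (fmin Y)) : fmin Y < x := by
  have h1 := Finset.mem_of_mem_erase hx
  have h2 := Finset.ne_of_mem_erase hx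
  have := fmin_le h1
  omega

lemma fmin_singleton (a : ℕ) : fmin ({a} : Finset ℕ) = a :=
  fmin_insert (B := ∅) (fun b hb => absurd hb (Finset.notMem_empty b))

lemma fmax_erase_fmin {Y : Finset ℕ} (h : (Y.erase (fmin Y)).Nonempty) :
    fmax (Y.erase (fmin Y)) = fmax Y := by
  obtain ⟨w, hw⟩ := h
  have hwY := Finset.mem_of_mem_erase hw
  have h1 : fmax (Y.erase (fmin Y)) ≤ fmax Y := fmax_le_fmax (Finset.erase_subset _ _) ⟨w, hw⟩
  have h2 : fmax Y ≤ fmax (Y.erase (fmin Y)) := by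
    apply le_fmax
    apply Finset.mem_erase.2
    refine ⟨?_, fmax_mem ⟨w, hwY⟩⟩
    have hwf := le_fmax hwY
    have := lt_of_mem_erase_fmin hw
    omega
  omega

end Aux
section LargeB

lemma omegaLarge_nonempty : ∀ (d : ℕ) {X : Finset ℕ}, OmegaLarge d X → X.Nonempty
  | 0, _, h => h
  | (_+1), _, h => h.1

lemma stack_lt {n : ℕ} {f : ℕ → Finset ℕ}
    (hne : ∀ m < n, (f m).Nonempty)
    (hstack : ∀ m, m + 1 < n → fmax (f m) < fmin (f (m+1))) :
    ∀ {m m' : ℕ}, m < m' → m' < n → ∀ x ∈ f m, ∀ y ∈ f m', x < y := by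
  intro m m' hmm' hm'n
  induction m' with
  | zero => omega
  | succ p IH =>
    intro x hx y hy
    by_cases hmp : m = p
    · subst hmp
      have h1 := le_fmax hx
      have h2 := hstack m hm'n
      have h3 := fmin_le hy
      omega
    · have hmp' : m < p := by omega
      obtain ⟨w, hw⟩ := hne p (by omega)
      have h1 := IH hmp' (by omega) x hx w hw
      have h2 := le_fmax hw
      have h3 := hstack p hm'n
      have h4 := fmin_le hy
      omega

lemma mergeBlocks {d n : ℕ} {f : ℕ → Finset ℕ}
    (hL : ∀ Z S : Finset ℕ, OmegaLarge d Z → (∀ s ∈ S, s < fmin Z) → (∀ s ∈ S, 0 < s) →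
      OmegaLarge d (Z ∪ S))
    (hf : ∀ m < n, OmegaLarge d (f m))
    (hstack : ∀ m, m + 1 < n → fmax (f m) < fmin (f (m+1)))
    (hpos : ∀ m < n, ∀ x ∈ f m, 0 < x) :
    ∀ t < n, OmegaLarge d ((Finset.range (t+1)).biUnion f) := by
  have hne : ∀ m < n, (f m).Nonempty := fun m hm => omegaLarge_nonempty d (hf m hm)
  intro t
  induction t with
  | zero =>
    intro h
    have : (Finset.range 1).biUnion f = f 0 := by simp
    rw [this]; exact hf 0 h
  | succ t IH =>
    intro h
    have hM := IH (by omega)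
    have heq : (Finset.range (t+2)).biUnion f = f (t+1) ∪ (Finset.range (t+1)).biUnion f := by
      rw [Finset.range_add_one, Finset.biUnion_insert]
    rw [heq]
    apply hL
    · exact hf (t+1) h
    · intro s hs
      rcases Finset.mem_biUnion.1 hs with ⟨j, hj, hsj⟩
      have hj' : j < t + 1 := Finset.mem_range.1 hj
      have hfm := fmin_mem (hne (t+1) h)
      exact stack_lt hne hstack (by omega) h s hsj _ hfm
    · intro s hs
      rcases Finset.mem_biUnion.1 hs with ⟨j, hj, hsj⟩
      exact hpos j (by have := Finset.mem_range.1 hj; omega) s hsj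

lemma omegaLarge_union_below : ∀ (d : ℕ) (Z S : Finset ℕ), OmegaLarge d Z →
    (∀ s ∈ S, s < fmin Z) → (∀ s ∈ S, 0 < s) → OmegaLarge d (Z ∪ S)
  | 0, Z, S, hZ, _, _ => by
    obtain ⟨x, hx⟩ := hZ
    exact ⟨x, Finset.mem_union_left _ hx⟩
  | (d+1), Z, S, hZ, hS, hS1 => by
    rcases Finset.eq_empty_or_nonempty S with rfl | hSne
    · simpa using hZ
    obtain ⟨hZne, f, hf, hstk, hmins, heq⟩ := hZ
    have hw0S : fmin S ∈ S := fmin_mem hSne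
    set m0 := fmin Z with hm0def
    set w0 := fmin S with hw0def
    have hw0m0 : w0 < m0 := hS _ hw0S
    have hw0pos : 0 < w0 := hS1 _ hw0S
    have hminU : fmin (Z ∪ S) = w0 := by
      have h1 : fmin (Z ∪ S) ≤ w0 := fmin_le (Finset.mem_union_right _ hw0S)
      have h2 : w0 ≤ fmin (Z ∪ S) := by
        have hm := fmin_mem (X := Z ∪ S) ⟨w0, Finset.mem_union_right _ hw0S⟩
        rcases Finset.mem_union.1 hm with h' | h'
        · have := fmin_le h'; omega
        · exact fmin_le h'
      omega
    have hne : ∀ m < m0, (f m).Nonempty := fun m hm => omegaLarge_nonempty d (hf m hm)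
    have helem : ∀ m, m < m0 → ∀ x ∈ f m, m0 < x :=
      fun m hm x hx => lt_of_lt_of_le (hmins m hm) (fmin_le hx)
    set t := m0 - w0 with htdef
    have ht1 : 1 ≤ t := by omega
    have htm0 : t < m0 := by omega
    set M := (Finset.range (t+1)).biUnion f with hMdef
    have hMne : M.Nonempty := by
      obtain ⟨x, hx⟩ := hne 0 (by omega)
      exact ⟨x, Finset.mem_biUnion.2 ⟨0, Finset.mem_range.2 (by omega), hx⟩⟩
    have hMelem : ∀ x ∈ M, m0 < x := by
      intro x hx
      rcases Finset.mem_biUnion.1 hx with ⟨j, hj, hxj⟩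
      exact helem j (by have := Finset.mem_range.1 hj; omega) x hxj
    have hMlarge : OmegaLarge d M :=
      mergeBlocks (omegaLarge_union_below d) hf hstk
        (fun m hm x hx => by have := helem m hm x hx; omega) t htm0
    set E := S.erase w0 ∪ {m0} with hEdef
    set g : ℕ → Finset ℕ := fun j => if j = 0 then M ∪ E else f (t + j) with hgdef
    have hg0 : OmegaLarge d (g 0) := by
      have : g 0 = M ∪ E := by simp [hgdef]
      rw [this]
      apply omegaLarge_union_below d M E hMlarge
      · intro s hs
        have hMmin : m0 < fmin M := lt_fmin hMne hMelem
        rcases Finset.mem_union.1 hs with h' | h'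
        · have h1 := Finset.mem_of_mem_erase h'
          have := hS _ h1; omega
        · have : s = m0 := Finset.mem_singleton.1 h'
          omega
      · intro s hs
        rcases Finset.mem_union.1 hs with h' | h'
        · exact hS1 _ (Finset.mem_of_mem_erase h')
        · have : s = m0 := Finset.mem_singleton.1 h'
          omega
    refine ⟨⟨w0, Finset.mem_union_right _ hw0S⟩, g, ?_, ?_, ?_, ?_⟩
    · rw [hminU]
      intro m hm
      rcases Nat.eq_zero_or_pos m with rfl | hmpos
      · exact hg0
      · have : g m = f (t + m) := by simp [hgdef]; omega
        rw [this]
        exact hf (t + m) (by omega)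
    · rw [hminU]
      intro m hm
      rcases Nat.eq_zero_or_pos m with rfl | hmpos
      · have hgm : g 0 = M ∪ E := by simp [hgdef]
        have hgm1 : g 1 = f (t + 1) := by simp [hgdef]
        rw [hgm, hgm1]
        have hfm := fmin_mem (hne (t+1) (by omega))
        apply fmax_lt
        · have := helem (t+1) (by omega) _ hfm; omega
        · intro x hx
          rcases Finset.mem_union.1 hx with h' | h'
          · rcases Finset.mem_biUnion.1 h' with ⟨j, hj, hxj⟩
            exact stack_lt hne hstk (by have := Finset.mem_range.1 hj; omega) (by omega) x hxj _ hfm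
          · rcases Finset.mem_union.1 h' with h'' | h''
            · have h1 := hS _ (Finset.mem_of_mem_erase h'')
              have := helem (t+1) (by omega) _ hfm; omega
            · have : x = m0 := Finset.mem_singleton.1 h''
              have := helem (t+1) (by omega) _ hfm; omega
      · have hgm : g m = f (t + m) := by simp [hgdef]; omega
        have hgm1 : g (m+1) = f (t + (m + 1)) := by simp [hgdef]
        rw [hgm, hgm1]
        have h' : t + (m + 1) = (t + m) + 1 := by omega
        rw [h']
        exact hstk (t + m) (by omega)
    · rw [hminU]
      intro m hm
      rcases Nat.eq_zero_or_pos m with rfl | hmpos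
      · have hgm : g 0 = M ∪ E := by simp [hgdef]
        rw [hgm]
        apply lt_fmin
        · obtain ⟨x, hx⟩ := hMne
          exact ⟨x, Finset.mem_union_left _ hx⟩
        · intro x hx
          rcases Finset.mem_union.1 hx with h' | h'
          · have := hMelem x h'; omega
          · rcases Finset.mem_union.1 h' with h'' | h''
            · have h1 := fmin_le (Finset.mem_of_mem_erase h'')
              have h2 := Finset.ne_of_mem_erase h''
              omega
            · have : x = m0 := Finset.mem_singleton.1 h''
              omega
      · have hgm : g m = f (t + m) := by simp [hgdef]; omega
        rw [hgm]
        have := hmins (t + m) (by omega)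
        omega
    · rw [hminU]
      apply Finset.ext
      intro x
      simp only [Finset.mem_union, Finset.mem_insert, Finset.mem_biUnion, Finset.mem_range]
      constructor
      · rintro (hxZ | hxS)
        · rw [heq] at hxZ
          rcases Finset.mem_insert.1 hxZ with rfl | hxZ'
          · -- x = m0
            right
            exact ⟨0, by omega, by simp [hgdef, hEdef]⟩
          · rcases Finset.mem_biUnion.1 hxZ' with ⟨j, hj, hxj⟩
            have hj' : j < m0 := Finset.mem_range.1 hj
            by_cases hjt : j ≤ t
            · right
              refine ⟨0, by omega, ?_⟩
              simp only [hgdef, if_pos rfl]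
              exact Finset.mem_union_left _
                (Finset.mem_biUnion.2 ⟨j, Finset.mem_range.2 (by omega), hxj⟩)
            · right
              refine ⟨j - t, by omega, ?_⟩
              have : g (j - t) = f (t + (j - t)) := by simp [hgdef]; omega
              rw [this]
              have : t + (j - t) = j := by omega
              rw [this]; exact hxj
        · by_cases hxw : x = w0
          · left; exact hxw
          · right
            refine ⟨0, by omega, ?_⟩
            simp only [hgdef, if_pos rfl]
            exact Finset.mem_union_right _
              (Finset.mem_union_left _ (Finset.mem_erase.2 ⟨hxw, hxS⟩))
      · rintro (rfl | ⟨m, hm, hxg⟩)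
        · right; exact hw0S
        · rcases Nat.eq_zero_or_pos m with rfl | hmpos
          · simp only [hgdef, if_pos rfl] at hxg
            rcases Finset.mem_union.1 hxg with h' | h'
            · rcases Finset.mem_biUnion.1 h' with ⟨j, hj, hxj⟩
              left
              rw [heq]
              exact Finset.mem_insert_of_mem
                (Finset.mem_biUnion.2 ⟨j, Finset.mem_range.2 (by have := Finset.mem_range.1 hj; omega), hxj⟩)
            · rcases Finset.mem_union.1 h' with h'' | h''
              · right; exact Finset.mem_of_mem_erase h''
              · left
                rw [heq]
                have : x = m0 := Finset.mem_singleton.1 h''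
                rw [this]; exact Finset.mem_insert_self _ _
          · have : g m = f (t + m) := by simp [hgdef]; omega
            rw [this] at hxg
            left
            rw [heq]
            exact Finset.mem_insert_of_mem
              (Finset.mem_biUnion.2 ⟨t + m, Finset.mem_range.2 (by omega), hxg⟩)

end LargeB
section LargeC

lemma omegaLarge_replace_min : ∀ (d : ℕ) {Z : Finset ℕ} {a : ℕ}, OmegaLarge d Z → 0 < a →
    a < fmin Z → OmegaLarge d (insert a (Z.erase (fmin Z)))
  | 0, Z, a, _, _, _ => ⟨a, Finset.mem_insert_self _ _⟩
  | (e+1), Z, a, h, ha, haz => by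
    obtain ⟨hZne, f, hf, hstk, hmins, heq⟩ := h
    set z0 := fmin Z with hz0def
    have hne : ∀ m < z0, (f m).Nonempty := fun m hm => omegaLarge_nonempty e (hf m hm)
    have helem : ∀ m, m < z0 → ∀ x ∈ f m, z0 < x :=
      fun m hm x hx => lt_of_lt_of_le (hmins m hm) (fmin_le hx)
    have hnotin : z0 ∉ (Finset.range z0).biUnion f := by
      intro hmem
      rcases Finset.mem_biUnion.1 hmem with ⟨j, hj, hx⟩
      have := helem j (Finset.mem_range.1 hj) _ hx; omega
    have herase : Z.erase z0 = (Finset.range z0).biUnion f := by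
      conv_lhs => rw [heq]
      exact Finset.erase_insert hnotin
    have hminW : fmin (insert a (Z.erase z0)) = a := by
      apply fmin_insert
      intro b hb
      have := lt_of_mem_erase_fmin hb
      omega
    set t := z0 - a with htdef
    have ht1 : 1 ≤ t := by omega
    have htz0 : t < z0 := by omega
    set g : ℕ → Finset ℕ := fun j => if j = 0 then (Finset.range (t+1)).biUnion f else f (t + j)
      with hgdef
    have hg0large : OmegaLarge e ((Finset.range (t+1)).biUnion f) :=
      mergeBlocks (omegaLarge_union_below e) hf hstk
        (fun m hm x hx => by have := helem m hm x hx; omega) t htz0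
    have hg0elem : ∀ x ∈ (Finset.range (t+1)).biUnion f, z0 < x := by
      intro x hx
      rcases Finset.mem_biUnion.1 hx with ⟨j, hj, hxj⟩
      exact helem j (by have := Finset.mem_range.1 hj; omega) x hxj
    have hg0ne : ((Finset.range (t+1)).biUnion f).Nonempty := by
      obtain ⟨x, hx⟩ := hne 0 (by omega)
      exact ⟨x, Finset.mem_biUnion.2 ⟨0, Finset.mem_range.2 (by omega), hx⟩⟩
    refine ⟨⟨a, Finset.mem_insert_self _ _⟩, g, ?_, ?_, ?_, ?_⟩
    · rw [hminW]
      intro m hm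
      rcases Nat.eq_zero_or_pos m with rfl | hmpos
      · simpa [hgdef] using hg0large
      · have : g m = f (t + m) := by simp [hgdef]; omega
        rw [this]
        exact hf (t + m) (by omega)
    · rw [hminW]
      intro m hm
      rcases Nat.eq_zero_or_pos m with rfl | hmpos
      · have hgm : g 0 = (Finset.range (t+1)).biUnion f := by simp [hgdef]
        have hgm1 : g 1 = f (t + 1) := by simp [hgdef]
        rw [hgm, hgm1]
        have hfm := fmin_mem (hne (t+1) (by omega))
        apply fmax_lt
        · have := helem (t+1) (by omega) _ hfm; omega
        · intro x hx
          rcases Finset.mem_biUnion.1 hx with ⟨j, hj, hxj⟩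
          exact stack_lt hne hstk (by have := Finset.mem_range.1 hj; omega) (by omega) x hxj _ hfm
      · have hgm : g m = f (t + m) := by simp [hgdef]; omega
        have hgm1 : g (m+1) = f (t + (m + 1)) := by simp [hgdef]
        rw [hgm, hgm1]
        have h' : t + (m + 1) = (t + m) + 1 := by omega
        rw [h']
        exact hstk (t + m) (by omega)
    · rw [hminW]
      intro m hm
      rcases Nat.eq_zero_or_pos m with rfl | hmpos
      · have hgm : g 0 = (Finset.range (t+1)).biUnion f := by simp [hgdef]
        rw [hgm]
        apply lt_fmin hg0ne
        intro x hx
        have := hg0elem x hx; omega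
      · have hgm : g m = f (t + m) := by simp [hgdef]; omega
        rw [hgm]
        have := hmins (t + m) (by omega)
        omega
    · rw [hminW, herase]
      apply Finset.ext
      intro x
      simp only [Finset.mem_insert, Finset.mem_biUnion, Finset.mem_range]
      constructor
      · rintro (rfl | ⟨j, hj, hxj⟩)
        · left; rfl
        · by_cases hjt : j ≤ t
          · right
            refine ⟨0, by omega, ?_⟩
            simp only [hgdef, if_pos rfl]
            exact Finset.mem_biUnion.2 ⟨j, Finset.mem_range.2 (by omega), hxj⟩
          · right
            refine ⟨j - t, by omega, ?_⟩
            have hg : g (j - t) = f (t + (j - t)) := by simp [hgdef]; omega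
            rw [hg]
            have : t + (j - t) = j := by omega
            rw [this]; exact hxj
      · rintro (rfl | ⟨m, hm, hxg⟩)
        · left; rfl
        · rcases Nat.eq_zero_or_pos m with rfl | hmpos
          · simp only [hgdef, if_pos rfl] at hxg
            rcases Finset.mem_biUnion.1 hxg with ⟨j, hj, hxj⟩
            right
            exact ⟨j, by have := Finset.mem_range.1 hj; omega, hxj⟩
          · have : g m = f (t + m) := by simp [hgdef]; omega
            rw [this] at hxg
            right
            exact ⟨t + m, by omega, hxg⟩

lemma fmin_blocks {n : ℕ} (hn : 0 < n) {B : ℕ → Finset ℕ}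
    (hne : ∀ m < n, (B m).Nonempty)
    (hstack : ∀ m, m + 1 < n → fmax (B m) < fmin (B (m+1))) :
    fmin ((Finset.range n).biUnion B) = fmin (B 0) := by
  have h0mem : fmin (B 0) ∈ (Finset.range n).biUnion B :=
    Finset.mem_biUnion.2 ⟨0, Finset.mem_range.2 hn, fmin_mem (hne 0 hn)⟩
  have h1 : fmin ((Finset.range n).biUnion B) ≤ fmin (B 0) := fmin_le h0mem
  have h2 : fmin (B 0) ≤ fmin ((Finset.range n).biUnion B) := by
    have hm := fmin_mem (X := (Finset.range n).biUnion B) ⟨_, h0mem⟩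
    rcases Finset.mem_biUnion.1 hm with ⟨j, hj, hx⟩
    rcases Nat.eq_zero_or_pos j with rfl | hjpos
    · exact fmin_le hx
    · have := stack_lt hne hstack hjpos (Finset.mem_range.1 hj) _ (fmin_mem (hne 0 hn)) _ hx
      omega
  omega

lemma omegaMul_to_succ {d : ℕ} {X : Finset ℕ} (ha : 0 < fmin X)
    (h : OmegaMulLarge d (fmin X + 1) X) : OmegaLarge (d+1) X := by
  obtain ⟨B, hB, hstack, heq⟩ := h
  have hne : ∀ m < fmin X + 1, (B m).Nonempty := fun m hm => omegaLarge_nonempty d (hB m hm)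
  have hminB0 : fmin (B 0) = fmin X := by
    conv_rhs => rw [heq]
    exact (fmin_blocks (by omega) hne hstack).symm
  have haB0 : fmin X ∈ B 0 := by rw [← hminB0]; exact fmin_mem (hne 0 (by omega))
  have hXne : X.Nonempty := by
    have hm := Finset.mem_biUnion.2 ⟨0, Finset.mem_range.2 (by omega : 0 < fmin X + 1), haB0⟩
    rw [← heq] at hm
    exact ⟨_, hm⟩
  have hgt : ∀ m, 0 < m → m < fmin X + 1 → ∀ x ∈ B m, fmin X < x := by
    intro m h0 h1 x hx
    exact stack_lt hne hstack h0 h1 _ haB0 _ hx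
  have hgt0 : ∀ x ∈ (B 0).erase (fmin X), fmin X < x := by
    intro x hx
    have h1 := Finset.mem_of_mem_erase hx
    have h2 := Finset.ne_of_mem_erase hx
    have h3 := fmin_le h1
    omega
  set f' : ℕ → Finset ℕ :=
    fun j => if j = 0 then (B 0).erase (fmin X) ∪ B 1 else B (j+1) with hf'def
  refine ⟨hXne, f', ?_, ?_, ?_, ?_⟩
  · intro m hm
    rcases Nat.eq_zero_or_pos m with rfl | hmpos
    · have hf0 : f' 0 = (B 0).erase (fmin X) ∪ B 1 := by simp [hf'def]
      rw [hf0, Finset.union_comm]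
      apply omegaLarge_union_below d _ _ (hB 1 (by omega))
      · intro s hs
        have h1 := Finset.mem_of_mem_erase hs
        exact stack_lt hne hstack (by omega) (by omega) s h1 _ (fmin_mem (hne 1 (by omega)))
      · intro s hs
        have := hgt0 s hs; omega
    · have hfm : f' m = B (m+1) := by simp [hf'def]; omega
      rw [hfm]
      exact hB (m+1) (by omega)
  · intro m hm
    rcases Nat.eq_zero_or_pos m with rfl | hmpos
    · have hf0 : f' 0 = (B 0).erase (fmin X) ∪ B 1 := by simp [hf'def]
      have hf1 : f' 1 = B 2 := by simp [hf'def]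
      rw [hf0, hf1]
      have hfm2 := fmin_mem (hne 2 (by omega))
      apply fmax_lt
      · have := hgt 2 (by omega) (by omega) _ hfm2; omega
      · intro x hx
        rcases Finset.mem_union.1 hx with h' | h'
        · exact stack_lt hne hstack (by omega) (by omega) x (Finset.mem_of_mem_erase h') _ hfm2
        · exact stack_lt hne hstack (by omega) (by omega) x h' _ hfm2
    · have hfm : f' m = B (m+1) := by simp [hf'def]; omega
      have hfm1 : f' (m+1) = B (m+2) := by simp [hf'def]
      rw [hfm, hfm1]
      exact hstack (m+1) (by omega)
  · intro m hm
    rcases Nat.eq_zero_or_pos m with rfl | hmpos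
    · have hf0 : f' 0 = (B 0).erase (fmin X) ∪ B 1 := by simp [hf'def]
      rw [hf0]
      apply lt_fmin
      · obtain ⟨w, hw⟩ := hne 1 (by omega)
        exact ⟨w, Finset.mem_union_right _ hw⟩
      · intro x hx
        rcases Finset.mem_union.1 hx with h' | h'
        · exact hgt0 x h'
        · exact hgt 1 (by omega) (by omega) x h'
    · have hfm : f' m = B (m+1) := by simp [hf'def]; omega
      rw [hfm]
      exact hgt (m+1) (by omega) (by omega) _ (fmin_mem (hne (m+1) (by omega)))
  · conv_lhs => rw [heq]
    apply Finset.ext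
    intro x
    simp only [Finset.mem_insert, Finset.mem_biUnion, Finset.mem_range]
    constructor
    · rintro ⟨j, hj, hxj⟩
      rcases Nat.eq_zero_or_pos j with rfl | hjpos
      · by_cases hxa : x = fmin X
        · left; exact hxa
        · right
          refine ⟨0, by omega, ?_⟩
          have hf0 : f' 0 = (B 0).erase (fmin X) ∪ B 1 := by simp [hf'def]
          rw [hf0]
          exact Finset.mem_union_left _ (Finset.mem_erase.2 ⟨hxa, hxj⟩)
      · rcases Nat.lt_or_ge j 2 with hj2 | hj2
        · have hj1 : j = 1 := by omega
          subst hj1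
          right
          refine ⟨0, by omega, ?_⟩
          have hf0 : f' 0 = (B 0).erase (fmin X) ∪ B 1 := by simp [hf'def]
          rw [hf0]
          exact Finset.mem_union_right _ hxj
        · right
          refine ⟨j - 1, by omega, ?_⟩
          have hfm : f' (j-1) = B ((j-1)+1) := by simp [hf'def]; omega
          have hj1 : (j-1)+1 = j := by omega
          rw [hfm, hj1]
          exact hxj
    · rintro (rfl | ⟨m, hm, hxm⟩)
      · exact ⟨0, by omega, haB0⟩
      · rcases Nat.eq_zero_or_pos m with rfl | hmpos
        · have hf0 : f' 0 = (B 0).erase (fmin X) ∪ B 1 := by simp [hf'def]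
          rw [hf0] at hxm
          rcases Finset.mem_union.1 hxm with h' | h'
          · exact ⟨0, by omega, Finset.mem_of_mem_erase h'⟩
          · exact ⟨1, by omega, h'⟩
        · have hfm : f' m = B (m+1) := by simp [hf'def]; omega
          rw [hfm] at hxm
          exact ⟨m+1, by omega, hxm⟩

lemma omegaMul_phi {d n : ℕ} (hn : 1 ≤ n) {Y : Finset ℕ} {a : ℕ} (ha : 0 < a)
    (haY : a < fmin Y) (h : OmegaMulLarge d n Y) :
    OmegaMulLarge d n (insert a (Y.erase (fmin Y))) := by
  obtain ⟨B, hB, hstack, heq⟩ := h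
  have hne : ∀ m < n, (B m).Nonempty := fun m hm => omegaLarge_nonempty d (hB m hm)
  have hminB0 : fmin (B 0) = fmin Y := by
    conv_rhs => rw [heq]
    exact (fmin_blocks (by omega) hne hstack).symm
  have hy0B0 : fmin Y ∈ B 0 := by rw [← hminB0]; exact fmin_mem (hne 0 (by omega))
  have hgt : ∀ m, 0 < m → m < n → ∀ x ∈ B m, fmin Y < x := by
    intro m h0 h1 x hx
    exact stack_lt hne hstack h0 h1 _ hy0B0 _ hx
  set g : ℕ → Finset ℕ :=
    fun j => if j = 0 then insert a ((B 0).erase (fmin (B 0))) else B j with hgdef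
  refine ⟨g, ?_, ?_, ?_⟩
  · intro m hm
    rcases Nat.eq_zero_or_pos m with rfl | hmpos
    · have hg0 : g 0 = insert a ((B 0).erase (fmin (B 0))) := by simp [hgdef]
      rw [hg0]
      exact omegaLarge_replace_min d (hB 0 (by omega)) ha (by omega)
    · have hgm : g m = B m := by simp [hgdef]; omega
      rw [hgm]; exact hB m hm
  · intro m hm
    rcases Nat.eq_zero_or_pos m with rfl | hmpos
    · have hg0 : g 0 = insert a ((B 0).erase (fmin (B 0))) := by simp [hgdef]
      have hg1 : g 1 = B 1 := by simp [hgdef]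
      rw [hg0, hg1]
      have hfm1 := fmin_mem (hne 1 (by omega))
      apply fmax_lt
      · have := hgt 1 (by omega) (by omega) _ hfm1; omega
      · intro x hx
        rcases Finset.mem_insert.1 hx with rfl | hx'
        · have := hgt 1 (by omega) (by omega) _ hfm1; omega
        · exact stack_lt hne hstack (by omega) (by omega) x (Finset.mem_of_mem_erase hx') _ hfm1
    · have hgm : g m = B m := by simp [hgdef]; omega
      have hgm1 : g (m+1) = B (m+1) := by simp [hgdef]
      rw [hgm, hgm1]
      exact hstack m hm
  · apply Finset.ext
    intro x
    simp only [Finset.mem_insert, Finset.mem_biUnion, Finset.mem_range, Finset.mem_erase]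
    constructor
    · rintro (rfl | ⟨hxne, hxY⟩)
      · refine ⟨0, by omega, ?_⟩
        simp [hgdef]
      · rw [heq] at hxY
        rcases Finset.mem_biUnion.1 hxY with ⟨j, hj, hxj⟩
        rcases Nat.eq_zero_or_pos j with rfl | hjpos
        · refine ⟨0, by omega, ?_⟩
          simp only [hgdef, if_pos rfl]
          exact Finset.mem_insert_of_mem (Finset.mem_erase.2 ⟨by omega, hxj⟩)
        · refine ⟨j, Finset.mem_range.1 hj, ?_⟩
          have : g j = B j := by simp [hgdef]; omega
          rw [this]; exact hxj
    · rintro ⟨m, hm, hxm⟩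
      rcases Nat.eq_zero_or_pos m with rfl | hmpos
      · simp only [hgdef, if_pos rfl] at hxm
        rcases Finset.mem_insert.1 hxm with rfl | hx'
        · left; rfl
        · right
          have h1 := Finset.mem_of_mem_erase hx'
          have h2 := Finset.ne_of_mem_erase hx'
          refine ⟨by omega, ?_⟩
          rw [heq]
          exact Finset.mem_biUnion.2 ⟨0, Finset.mem_range.2 (by omega), h1⟩
      · have hgm : g m = B m := by simp [hgdef]; omega
        rw [hgm] at hxm
        have := hgt m hmpos hm x hxm
        refine Or.inr ⟨by omega, ?_⟩
        rw [heq]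
        exact Finset.mem_biUnion.2 ⟨m, Finset.mem_range.2 hm, hxm⟩

end LargeC
section TreeBasics

open List

lemma mem_level {T : Finset (List Bool)} {x : ℕ} {σ : List Bool} :
    σ ∈ level T x ↔ σ ∈ T ∧ σ.length = x := Finset.mem_filter

lemma consec_min_second {V : Finset ℕ} (h : (V.erase (fmin V)).Nonempty) :
    Consec V (fmin V) (fmin (V.erase (fmin V))) := by
  have h1 : fmin (V.erase (fmin V)) ∈ V.erase (fmin V) := fmin_mem h
  have h2 : fmin (V.erase (fmin V)) ∈ V := Finset.mem_of_mem_erase h1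
  have h3 : fmin V < fmin (V.erase (fmin V)) := lt_of_mem_erase_fmin h1
  refine ⟨fmin_mem ⟨_, h2⟩, h2, h3, ?_⟩
  intro y hy
  by_cases hymin : y = fmin V
  · left; omega
  · right; exact fmin_le (Finset.mem_erase.2 ⟨hymin, hy⟩)

lemma consec_min_eq {V : Finset ℕ} {z : ℕ} (hc : Consec V (fmin V) z) :
    z = fmin (V.erase (fmin V)) := by
  obtain ⟨hx, hz, hlt, hsep⟩ := hc
  have hzE : z ∈ V.erase (fmin V) := Finset.mem_erase.2 ⟨by omega, hz⟩
  have h1 : fmin (V.erase (fmin V)) ≤ z := fmin_le hzE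
  have h2 : fmin (V.erase (fmin V)) ∈ V := Finset.mem_of_mem_erase (fmin_mem ⟨z, hzE⟩)
  have h3 : fmin V < fmin (V.erase (fmin V)) := lt_of_mem_erase_fmin (fmin_mem ⟨z, hzE⟩)
  rcases hsep _ h2 with h' | h'
  · omega
  · omega

lemma consec_erase_min {B : Finset ℕ} {x z : ℕ} (hc : Consec (B.erase (fmin B)) x z) :
    Consec B x z := by
  obtain ⟨hx, hz, hlt, hsep⟩ := hc
  refine ⟨Finset.mem_of_mem_erase hx, Finset.mem_of_mem_erase hz, hlt, ?_⟩
  intro y hy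
  by_cases hymin : y = fmin B
  · left
    have := fmin_le (Finset.mem_of_mem_erase hx)
    omega
  · exact hsep y (Finset.mem_erase.2 ⟨hymin, hy⟩)

lemma consec_insert_low {a : ℕ} {B : Finset ℕ} (hab : ∀ b ∈ B, a < b) {x z : ℕ}
    (hc : Consec B x z) : Consec (insert a B) x z := by
  obtain ⟨hx, hz, hlt, hsep⟩ := hc
  refine ⟨Finset.mem_insert_of_mem hx, Finset.mem_insert_of_mem hz, hlt, ?_⟩
  intro y hy
  rcases Finset.mem_insert.1 hy with rfl | hy'
  · left; have := hab x hx; omega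
  · exact hsep y hy'

lemma consec_insert_cases {a : ℕ} {B : Finset ℕ} (hab : ∀ b ∈ B, a < b) {x z : ℕ}
    (hc : Consec (insert a B) x z) : (x = a ∧ z = fmin B) ∨ Consec B x z := by
  obtain ⟨hx, hz, hlt, hsep⟩ := hc
  rcases Finset.mem_insert.1 hx with rfl | hxB
  · left
    have hzB : z ∈ B := by
      rcases Finset.mem_insert.1 hz with rfl | h'
      · omega
      · exact h'
    have h1 : fmin B ≤ z := fmin_le hzB
    have h2 : fmin B ∈ B := fmin_mem ⟨z, hzB⟩
    rcases hsep _ (Finset.mem_insert_of_mem h2) with h' | h'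
    · have := hab _ h2; omega
    · exact ⟨rfl, by omega⟩
  · right
    have hzB : z ∈ B := by
      rcases Finset.mem_insert.1 hz with rfl | h'
      · have := hab x hxB; omega
      · exact h'
    refine ⟨hxB, hzB, hlt, ?_⟩
    intro y hy
    exact hsep y (Finset.mem_insert_of_mem hy)

lemma ext_to_top {V : Finset ℕ} {T : Finset (List Bool)} (hT : QuasiStrong V T) :
    ∀ x ∈ V, ∀ σ ∈ level T x, ∃ τ ∈ level T (fmax V), σ <+: τ := by
  suffices H : ∀ n x, x ∈ V → fmax V - x ≤ n → ∀ σ ∈ level T x,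
      ∃ τ ∈ level T (fmax V), σ <+: τ by
    intro x hx σ hσ; exact H (fmax V - x) x hx le_rfl σ hσ
  intro n
  induction n with
  | zero =>
    intro x hx hle σ hσ
    have h1 := le_fmax hx
    have hxe : x = fmax V := by omega
    exact ⟨σ, hxe ▸ hσ, prefix_rfl⟩
  | succ n IH =>
    intro x hx hle σ hσ
    by_cases hxf : fmax V ≤ x
    · have h1 := le_fmax hx
      have hxe : x = fmax V := by omega
      exact ⟨σ, hxe ▸ hσ, prefix_rfl⟩
    · have hne : (V.filter (fun y => x < y)).Nonempty :=
        ⟨fmax V, Finset.mem_filter.2 ⟨fmax_mem ⟨x, hx⟩, by omega⟩⟩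
      set z := (V.filter (fun y => x < y)).min' hne with hzdef
      have hz := (V.filter (fun y => x < y)).min'_mem hne
      have hzV := (Finset.mem_filter.1 hz).1
      have hxz : x < z := (Finset.mem_filter.1 hz).2
      have hcons : Consec V x z := by
        refine ⟨hx, hzV, hxz, ?_⟩
        intro y hy
        by_cases hxy : x < y
        · right; exact Finset.min'_le _ y (Finset.mem_filter.2 ⟨hy, hxy⟩)
        · left; omega
      have hcard := hT.2.2 x z hcons σ hσ
      have hfne : ((level T z).filter (fun τ => σ <+: τ)).Nonempty := by
        rw [← Finset.card_pos, hcard]; omega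
      obtain ⟨τ', hτ'⟩ := hfne
      have hτ'z := (Finset.mem_filter.1 hτ').1
      have hστ' := (Finset.mem_filter.1 hτ').2
      have hzf := le_fmax hzV
      obtain ⟨τ, hτ, hpre⟩ := IH z hzV (by omega) τ' hτ'z
      exact ⟨τ, hτ, hστ'.trans hpre⟩

lemma to_leaf {S : Finset (List Bool)} {σ : List Bool} (hσ : σ ∈ S) :
    ∃ l, IsLeaf S l ∧ σ <+: l := by
  suffices H : ∀ n (σ : List Bool), σ ∈ S → S.sup List.length - σ.length ≤ n →
      ∃ l, IsLeaf S l ∧ σ <+: l by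
    exact H _ σ hσ le_rfl
  intro n
  induction n with
  | zero =>
    intro σ hσ hlen
    refine ⟨σ, ⟨hσ, ?_⟩, prefix_rfl⟩
    intro τ hτ hpre
    have h1 := Finset.le_sup (f := List.length) hτ
    have h2 := hpre.length_le
    exact (hpre.eq_of_length (by omega)).symm
  | succ n IH =>
    intro σ hσ hlen
    by_cases hex : ∃ τ ∈ S, σ <+: τ ∧ τ ≠ σ
    · obtain ⟨τ, hτS, hpre, hne⟩ := hex
      have h1 := hpre.length_le
      have h2 : σ.length ≠ τ.length := by
        intro hc
        exact hne (hpre.eq_of_length hc).symm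
      have h3 := Finset.le_sup (f := List.length) hτS
      obtain ⟨l, hl, hτl⟩ := IH τ hτS (by omega)
      exact ⟨l, hl, hpre.trans hτl⟩
    · push_neg at hex
      refine ⟨σ, ⟨hσ, ?_⟩, prefix_rfl⟩
      intro τ hτ hpre
      exact hex τ hτ hpre

lemma trivClause {k a : ℕ} {V : Finset ℕ} (hV : V.Nonempty) (ha : a ≤ fmin V) :
    PersClause k V {a} := by
  intro T hT C hC
  obtain ⟨x0, hx0⟩ := hT.2.1 (fmin V) (fmin_mem hV)
  obtain ⟨τ, hτ, hpre⟩ := ext_to_top hT (fmin V) (fmin_mem hV) x0 hx0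
  have hτT := (mem_level.1 hτ).1
  have hτlen := (mem_level.1 hτ).2
  have hx0len := (mem_level.1 hx0).2
  have hafmax : a ≤ fmax V := le_trans ha (fmin_le (fmax_mem hV))
  set ρ := τ.take a with hρdef
  have hρτ : ρ <+: τ := take_prefix a τ
  have hρT : ρ ∈ T := hT.1 τ hτT ρ hρτ
  have hρlen : ρ.length = a := by
    rw [hρdef, List.length_take]
    omega
  have hρS : ρ ∈ T.filter (fun σ => σ <+: ρ) :=
    Finset.mem_filter.2 ⟨hρT, prefix_rfl⟩
  refine ⟨C τ, hC τ hτ, T.filter (fun σ => σ <+: ρ), Finset.filter_subset _ _, ⟨?_, ?_, ?_⟩, ?_⟩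
  · intro σ hσ π hπ
    have hσ' := Finset.mem_filter.1 hσ
    exact Finset.mem_filter.2 ⟨hT.1 σ hσ'.1 π hπ, hπ.trans hσ'.2⟩
  · intro x hx
    have hxa : x = a := Finset.mem_singleton.1 hx
    subst hxa
    exact ⟨ρ, Finset.mem_filter.2 ⟨hρS, hρlen⟩⟩
  · intro x z hc
    have hx := Finset.mem_singleton.1 hc.1
    have hz := Finset.mem_singleton.1 hc.2.1
    have := hc.2.2.1
    omega
  · intro σ hleaf
    obtain ⟨hσmem, hmax⟩ := hleaf
    have hσρ : σ <+: ρ := (Finset.mem_filter.1 hσmem).2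
    have hσeq : ρ = σ := hmax ρ hρS hσρ
    refine ⟨τ, hτ, ?_, rfl⟩
    rw [← hσeq]
    exact hρτ

end TreeBasics
section Prune

open List

lemma pruneS {B : Finset ℕ} {S : Finset (List Bool)} {a : ℕ} (ha : a < fmin B)
    (hB : B.Nonempty) (hS : QuasiStrong B S) {σ0 : List Bool}
    (hσ0 : σ0 ∈ level S (fmin B)) :
    Tsub S σ0 ⊆ S ∧ QuasiStrong (insert a (B.erase (fmin B))) (Tsub S σ0) ∧
      (∀ x, IsLeaf (Tsub S σ0) x → IsLeaf S x) := by
  have hσ0S := (mem_level.1 hσ0).1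
  have hσ0len := (mem_level.1 hσ0).2
  have hmemTsub : ∀ {x : List Bool}, x ∈ Tsub S σ0 ↔ x ∈ S ∧ Compat x σ0 :=
    fun {x} => Finset.mem_filter
  have hab : ∀ b ∈ B.erase (fmin B), a < b := by
    intro b hb
    have := lt_of_mem_erase_fmin hb
    omega
  set ρ0 := σ0.take a with hρ0def
  have hρ0pre : ρ0 <+: σ0 := take_prefix a σ0
  have hρ0S : ρ0 ∈ S := hS.1 σ0 hσ0S ρ0 hρ0pre
  have hρ0len : ρ0.length = a := by
    rw [hρ0def, List.length_take]; omega
  have hρ0mem : ρ0 ∈ Tsub S σ0 := hmemTsub.2 ⟨hρ0S, Or.inl hρ0pre⟩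
  -- level a of Tsub is {ρ0}
  have hlevela : ∀ x ∈ level (Tsub S σ0) a, x = ρ0 := by
    intro x hx
    obtain ⟨hx1, hx2⟩ := mem_level.1 hx
    obtain ⟨hxS, hxc⟩ := hmemTsub.1 hx1
    have hxpre : x <+: σ0 := by
      rcases hxc with h' | h'
      · exact h'
      · have := h'.length_le; omega
    rw [prefix_iff_eq_take.1 hxpre, hx2, hρ0def]
  -- nodes of Tsub at levels > fmin B extend σ0
  have hhigh : ∀ {x : List Bool}, x ∈ Tsub S σ0 → fmin B ≤ x.length → σ0 <+: x := by
    intro x hx hlen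
    obtain ⟨hxS, hxc⟩ := hmemTsub.1 hx
    rcases hxc with h' | h'
    · have := h'.length_le
      have hxeq : x = σ0 := h'.eq_of_length (by omega)
      rw [hxeq]
    · exact h'
  refine ⟨Finset.filter_subset _ _, ⟨?_, ?_, ?_⟩, ?_⟩
  · -- IsTree
    intro x hx π hπ
    obtain ⟨hxS, hxc⟩ := hmemTsub.1 hx
    refine hmemTsub.2 ⟨hS.1 x hxS π hπ, ?_⟩
    rcases hxc with h' | h'
    · exact Or.inl (hπ.trans h')
    · rcases prefix_or_prefix_of_prefix hπ h' with h'' | h''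
      · exact Or.inl h''
      · exact Or.inr h''
  · -- level nonemptiness
    intro x hx
    rcases Finset.mem_insert.1 hx with rfl | hxE
    · exact ⟨ρ0, mem_level.2 ⟨hρ0mem, hρ0len⟩⟩
    · have hxB := Finset.mem_of_mem_erase hxE
      have hxgt := lt_of_mem_erase_fmin hxE
      obtain ⟨τ, hτ, hpre⟩ := ext_to_top hS (fmin B) (fmin_mem hB) σ0 hσ0
      have hτS := (mem_level.1 hτ).1
      have hτlen := (mem_level.1 hτ).2
      have hxfmax : x ≤ fmax B := le_fmax hxB
      refine ⟨τ.take x, mem_level.2 ⟨?_, ?_⟩⟩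
      · refine hmemTsub.2 ⟨hS.1 τ hτS _ (take_prefix x τ), Or.inr ?_⟩
        exact prefix_take_iff.2 ⟨hpre, by omega⟩
      · rw [List.length_take]; omega
  · -- branching
    intro x z hc σ hσ
    rcases consec_insert_cases hab hc with ⟨rfl, hz⟩ | hc'
    · -- x = a, z = fmin (B.erase (fmin B))
      have hzE : z ∈ B.erase (fmin B) := by
        rcases Finset.mem_insert.1 hc.2.1 with h' | h'
        · have := hc.2.2.1; omega
        · exact h'
      have hEne : (B.erase (fmin B)).Nonempty := ⟨z, hzE⟩
      have hconsB : Consec B (fmin B) (fmin (B.erase (fmin B))) := consec_min_second hEne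
      have hσeq := hlevela σ hσ
      subst hσeq
      have hcard := hS.2.2 (fmin B) (fmin (B.erase (fmin B))) hconsB σ0 hσ0
      rw [← hz] at hcard
      rw [← hcard]
      congr 1
      apply Finset.ext
      intro y
      simp only [Finset.mem_filter, mem_level, hmemTsub]
      constructor
      · rintro ⟨⟨⟨hyS, hyc⟩, hylen⟩, hρy⟩
        have hzgt := lt_of_mem_erase_fmin hzE
        have hy0 : σ0 <+: y := by
          rcases hyc with h' | h'
          · have := h'.length_le; omega
          · exact h'
        exact ⟨⟨hyS, hylen⟩, hy0⟩
      · rintro ⟨⟨hyS, hylen⟩, h0y⟩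
        exact ⟨⟨⟨hyS, Or.inr h0y⟩, hylen⟩, hρ0pre.trans h0y⟩
    · -- higher pair
      have hconsB := consec_erase_min hc'
      have hxgt := lt_of_mem_erase_fmin hc'.1
      have hσmem := (mem_level.1 hσ).1
      have hσlen := (mem_level.1 hσ).2
      obtain ⟨hσS, hσc⟩ := hmemTsub.1 hσmem
      have hσ0σ : σ0 <+: σ := hhigh hσmem (by omega)
      have hcard := hS.2.2 x z hconsB σ (mem_level.2 ⟨hσS, hσlen⟩)
      rw [← hcard]
      congr 1
      apply Finset.ext
      intro y
      simp only [Finset.mem_filter, mem_level, hmemTsub]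
      constructor
      · rintro ⟨⟨⟨hyS, hyc⟩, hylen⟩, hσy⟩
        exact ⟨⟨hyS, hylen⟩, hσy⟩
      · rintro ⟨⟨hyS, hylen⟩, hσy⟩
        exact ⟨⟨⟨hyS, Or.inr (hσ0σ.trans hσy)⟩, hylen⟩, hσy⟩
  · -- leaves
    intro x hx
    obtain ⟨hxmem, hmax⟩ := hx
    obtain ⟨hxS, hxc⟩ := hmemTsub.1 hxmem
    have hσ0x : σ0 <+: x := by
      rcases hxc with h' | h'
      · have hσ0mem : σ0 ∈ Tsub S σ0 := hmemTsub.2 ⟨hσ0S, Or.inl prefix_rfl⟩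
        have := hmax σ0 hσ0mem h'
        rw [← this]
      · exact h'
    refine ⟨hxS, ?_⟩
    intro τ hτ hxτ
    exact hmax τ (hmemTsub.2 ⟨hτ, Or.inr (hσ0x.trans hxτ)⟩) hxτ

lemma clausePrune {k a : ℕ} {A B : Finset ℕ} (hB : B.Nonempty) (ha : a < fmin B)
    (hcl : PersClause k A B) : PersClause k A (insert a (B.erase (fmin B))) := by
  intro T hT C hC
  obtain ⟨c, hck, S, hST, hSqs, hleaf⟩ := hcl T hT C hC
  obtain ⟨σ0, hσ0⟩ := hSqs.2.1 (fmin B) (fmin_mem hB)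
  obtain ⟨hsub, hqs, hlv⟩ := pruneS ha hB hSqs hσ0
  exact ⟨c, hck, Tsub S σ0, hsub.trans hST, hqs, fun σ hσ => hleaf σ (hlv σ hσ)⟩

end Prune
section Stretch

open List

noncomputable def pickP (T : Finset (List Bool)) (y1 : ℕ) (ρ : List Bool) : List Bool :=
  if h : ((level T y1).filter (fun τ => ρ <+: τ)).Nonempty then h.choose else []

lemma pickP_mem {T : Finset (List Bool)} {y1 : ℕ} {ρ : List Bool}
    (h : ((level T y1).filter (fun τ => ρ <+: τ)).Nonempty) :
    pickP T y1 ρ ∈ (level T y1).filter (fun τ => ρ <+: τ) := by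
  rw [pickP, dif_pos h]
  exact h.choose_spec

noncomputable def bitO (T : Finset (List Bool)) (a y1 : ℕ) (τ : List Bool) : Bool :=
  decide (τ ≠ pickP T y1 (τ.take a))

lemma bitO_inj {T : Finset (List Bool)} {a y1 : ℕ} {ρ α β : List Bool}
    (hcard : ((level T y1).filter (fun τ => ρ <+: τ)).card = 2)
    (hα : α ∈ (level T y1).filter (fun τ => ρ <+: τ))
    (hβ : β ∈ (level T y1).filter (fun τ => ρ <+: τ))
    (hρα : α.take a = ρ) (hρβ : β.take a = ρ)
    (hbit : bitO T a y1 α = bitO T a y1 β) : α = β := by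
  have hne : ((level T y1).filter (fun τ => ρ <+: τ)).Nonempty := ⟨α, hα⟩
  have hp := pickP_mem hne
  rw [bitO, bitO, hρα, hρβ, decide_eq_decide, not_iff_not] at hbit
  by_cases h1 : α = pickP T y1 ρ
  · rw [h1, ← hbit.1 h1]
  · have h2 : ¬ β = pickP T y1 ρ := fun h => h1 (hbit.2 h)
    by_contra hne'
    have hsub : {pickP T y1 ρ, α, β} ⊆ (level T y1).filter (fun τ => ρ <+: τ) := by
      intro x hx
      rcases Finset.mem_insert.1 hx with rfl | hx'
      · exact hp
      · rcases Finset.mem_insert.1 hx' with rfl | hx''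
        · exact hα
        · rw [Finset.mem_singleton.1 hx'']; exact hβ
    have hcard3 : ({pickP T y1 ρ, α, β} : Finset (List Bool)).card = 3 := by
      rw [Finset.card_insert_of_notMem, Finset.card_insert_of_notMem]
      · simp
      · simpa using hne'
      · simp only [Finset.mem_insert, Finset.mem_singleton]
        push_neg
        exact ⟨fun h => h1 h.symm, fun h => h2 h.symm⟩
    have := Finset.card_le_card hsub
    omega

noncomputable def str (T : Finset (List Bool)) (a y0 y1 : ℕ) (σ : List Bool) : List Bool :=
  σ.take a ++ List.replicate (y0 - a) false ++
    (bitO T a y1 (σ.take y1) :: List.replicate (y1 - y0 - 1) false) ++ σ.drop y1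

variable {T : Finset (List Bool)} {a y0 y1 : ℕ}

lemma str_grp {σ : List Bool} :
    str T a y0 y1 σ = (σ.take a ++ List.replicate (y0 - a) false) ++
      ((bitO T a y1 (σ.take y1) :: List.replicate (y1 - y0 - 1) false) ++ σ.drop y1) := by
  rw [str]; simp only [List.append_assoc]

lemma str_len (ha : a < y0) (h01 : y0 < y1) {σ : List Bool} (hσ : y1 ≤ σ.length) :
    (str T a y0 y1 σ).length = σ.length := by
  rw [str]
  simp only [List.length_append, List.length_take, List.length_replicate, List.length_cons,
    List.length_drop]
  omega

lemma str_take_y0 (ha : a < y0) (h01 : y0 < y1) {σ : List Bool} (hσ : y1 ≤ σ.length) :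
    (str T a y0 y1 σ).take y0 = σ.take a ++ List.replicate (y0 - a) false := by
  rw [str_grp]
  apply List.take_left'
  simp only [List.length_append, List.length_take, List.length_replicate]
  omega

lemma str_drop_y0 (ha : a < y0) (h01 : y0 < y1) {σ : List Bool} (hσ : y1 ≤ σ.length) :
    (str T a y0 y1 σ).drop y0 =
      bitO T a y1 (σ.take y1) :: (List.replicate (y1 - y0 - 1) false ++ σ.drop y1) := by
  rw [str_grp]
  rw [List.drop_left' (by
    simp only [List.length_append, List.length_take, List.length_replicate]; omega)]
  simp

lemma str_take_low (ha : a < y0) (h01 : y0 < y1) {σ : List Bool} (hσ : y1 ≤ σ.length)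
    {l : ℕ} (hl : l ≤ a) : (str T a y0 y1 σ).take l = σ.take l := by
  have h1 : (str T a y0 y1 σ).take l = ((str T a y0 y1 σ).take y0).take l := by
    rw [List.take_take, Nat.min_eq_left (by omega)]
  rw [h1, str_take_y0 ha h01 hσ]
  rw [List.take_append]
  have h2 : (σ.take a).length = a := by rw [List.length_take]; omega
  rw [h2]
  have h3 : l - a = 0 := by omega
  rw [h3]
  simp [List.take_take, Nat.min_eq_left hl]

lemma str_decomp (ha : a < y0) (h01 : y0 < y1) {σ : List Bool} (hσ : y1 ≤ σ.length) :
    str T a y0 y1 σ = str T a y0 y1 (σ.take y1) ++ σ.drop y1 := by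
  conv_rhs => rw [str]
  rw [List.take_take, List.take_take]
  have h1 : min a y1 = a := Nat.min_eq_left (by omega)
  have h2 : min y1 y1 = y1 := Nat.min_eq_left le_rfl
  rw [h1, h2]
  have h3 : (σ.take y1).drop y1 = [] := by
    apply List.drop_eq_nil_of_le
    rw [List.length_take]; omega
  rw [h3, List.append_nil, str]

lemma str_head_len (ha : a < y0) (h01 : y0 < y1) {σ : List Bool} (hσ : y1 ≤ σ.length) :
    (str T a y0 y1 (σ.take y1)).length = y1 := by
  rw [str_len ha h01 (by rw [List.length_take]; omega)]
  rw [List.length_take]; omega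

lemma str_take (ha : a < y0) (h01 : y0 < y1) {σ : List Bool} {l : ℕ} (hl : y1 ≤ l)
    (hlσ : l ≤ σ.length) : (str T a y0 y1 σ).take l = str T a y0 y1 (σ.take l) := by
  have hσ' : y1 ≤ σ.length := by omega
  have hhl := str_head_len (T := T) ha h01 hσ'
  rw [str_decomp ha h01 hσ']
  rw [List.take_append]
  rw [List.take_of_length_le (by omega : (str T a y0 y1 (σ.take y1)).length ≤ l), hhl]
  have hrhs : str T a y0 y1 (σ.take l) =
      str T a y0 y1 ((σ.take l).take y1) ++ (σ.take l).drop y1 := by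
    apply str_decomp ha h01
    rw [List.length_take]; omega
  rw [hrhs, List.take_take, Nat.min_eq_left hl, List.drop_take]

lemma str_prefix (ha : a < y0) (h01 : y0 < y1) {α β : List Bool} (hy1 : y1 ≤ α.length)
    (hpre : α <+: β) : str T a y0 y1 α <+: str T a y0 y1 β := by
  have h1 : α = β.take α.length := prefix_iff_eq_take.1 hpre
  have h2 := hpre.length_le
  have h3 : (str T a y0 y1 β).take α.length = str T a y0 y1 α := by
    rw [str_take ha h01 hy1 h2, ← h1]
  rw [← h3]
  exact take_prefix _ _

lemma str_take_a (ha : a < y0) (h01 : y0 < y1) {σ : List Bool} (hσ : y1 ≤ σ.length) :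
    (str T a y0 y1 σ).take a = σ.take a :=
  str_take_low ha h01 hσ le_rfl

end Stretch
section StretchInj

open List

lemma str_inj {T : Finset (List Bool)} {a y0 y1 : ℕ} (ha : a < y0) (h01 : y0 < y1)
    {α β : List Bool} (hlen : α.length = β.length) (hy1 : y1 ≤ α.length)
    (hαT : α.take y1 ∈ level T y1) (hβT : β.take y1 ∈ level T y1)
    (hcard : ((level T y1).filter (fun τ => (α.take a) <+: τ)).card = 2)
    (hstr : str T a y0 y1 α = str T a y0 y1 β) : α = β := by
  have hy1β : y1 ≤ β.length := by omega
  have hta : α.take a = β.take a := by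
    have h := congrArg (List.take a) hstr
    rwa [str_take_a ha h01 hy1, str_take_a ha h01 hy1β] at h
  have hbit : bitO T a y1 (α.take y1) = bitO T a y1 (β.take y1) := by
    have h := congrArg (List.drop y0) hstr
    rw [str_drop_y0 ha h01 hy1, str_drop_y0 ha h01 hy1β] at h
    exact (List.cons_eq_cons.1 h).1
  have hd : α.drop y1 = β.drop y1 := by
    have h := congrArg (List.drop y1) hstr
    rw [str_decomp ha h01 hy1, str_decomp ha h01 hy1β,
      List.drop_left' (str_head_len ha h01 hy1),
      List.drop_left' (str_head_len ha h01 hy1β)] at h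
    exact h
  have ht1 : (α.take y1).take a = α.take a := by
    rw [List.take_take, Nat.min_eq_left (by omega)]
  have ht2 : (β.take y1).take a = α.take a := by
    rw [List.take_take, Nat.min_eq_left (by omega), hta]
  have htake_mem1 : α.take y1 ∈ (level T y1).filter (fun τ => (α.take a) <+: τ) := by
    refine Finset.mem_filter.2 ⟨hαT, ?_⟩
    rw [← ht1]; exact take_prefix _ _
  have htake_mem2 : β.take y1 ∈ (level T y1).filter (fun τ => (α.take a) <+: τ) := by
    refine Finset.mem_filter.2 ⟨hβT, ?_⟩
    rw [← ht2]; exact take_prefix _ _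
  have hty1 : α.take y1 = β.take y1 := bitO_inj hcard htake_mem1 htake_mem2 ht1 ht2 hbit
  calc α = α.take y1 ++ α.drop y1 := (List.take_append_drop _ _).symm
    _ = β.take y1 ++ β.drop y1 := by rw [hty1, hd]
    _ = β := List.take_append_drop _ _

end StretchInj
section StretchClause

open List

lemma stretch_clause {k a y0 y1 z0 z1 : ℕ} {Y Z : Finset ℕ}
    (hy0d : y0 = fmin Y) (hy1d : y1 = fmin (Y.erase y0))
    (hz0d : z0 = fmin Z) (hz1d : z1 = fmin (Z.erase z0))
    (haY : a < y0) (hZY : Z ⊆ Y)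
    (hZ2 : (Z.erase z0).Nonempty)
    (hcl : PersClause k Y Z) :
    PersClause k (insert a (Y.erase y0)) (insert a (Z.erase z0)) := by
  classical
  have hz1E : z1 ∈ Z.erase z0 := by rw [hz1d]; exact fmin_mem hZ2
  have hz1Z : z1 ∈ Z := Finset.mem_of_mem_erase hz1E
  have hZne : Z.Nonempty := ⟨_, hz1Z⟩
  have hYne : Y.Nonempty := ⟨_, hZY hz1Z⟩
  have hz0Z : z0 ∈ Z := by rw [hz0d]; exact fmin_mem hZne
  have hz0Y : z0 ∈ Y := hZY hz0Z
  have hz0z1 : z0 < z1 := by rw [hz0d] at hz1E ⊢; exact lt_of_mem_erase_fmin hz1E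
  have hy0z0 : y0 ≤ z0 := by rw [hy0d]; exact fmin_le hz0Y
  have hz1Ye : z1 ∈ Y.erase y0 := by
    rw [hy0d]
    exact Finset.mem_erase.2 ⟨by rw [← hy0d]; omega, hZY hz1Z⟩
  have hYe_ne : (Y.erase y0).Nonempty := ⟨_, hz1Ye⟩
  have h01 : y0 < y1 := by
    rw [hy1d, hy0d]
    exact lt_of_mem_erase_fmin (fmin_mem (by rw [← hy0d]; exact hYe_ne))
  have hy1z1 : y1 ≤ z1 := by rw [hy1d]; exact fmin_le hz1Ye
  have hy1Ye : y1 ∈ Y.erase y0 := by rw [hy1d]; exact fmin_mem hYe_ne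
  have hy1Y : y1 ∈ Y := Finset.mem_of_mem_erase hy1Ye
  have hzlow : ∀ w ∈ Z, z0 ≤ w := by rw [hz0d]; exact fun w hw => fmin_le hw
  have hylow : ∀ w ∈ Y, y0 ≤ w := by rw [hy0d]; exact fun w hw => fmin_le hw
  have hVelem : ∀ b ∈ Y.erase y0, a < b := by
    intro b hb
    rw [hy0d] at hb
    have := lt_of_mem_erase_fmin hb
    omega
  have hfminV : fmin (insert a (Y.erase y0)) = a :=
    fmin_insert (fun b hb => le_of_lt (hVelem b hb))
  have hVea : (insert a (Y.erase y0)).erase a = Y.erase y0 :=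
    Finset.erase_insert (fun hmem => by have := hVelem a hmem; omega)
  have hfmaxez : fmax (Y.erase y0) = fmax Y := by
    rw [hy0d]
    exact fmax_erase_fmin (by rw [← hy0d]; exact hYe_ne)
  have hfmaxV : fmax (insert a (Y.erase y0)) = fmax Y := by
    rw [fmax_insert' hYe_ne (by
      have := le_fmax hz1Ye
      omega), hfmaxez]
  intro T hT C hC
  have htree := hT.1
  -- Consec (insert a (Y.erase y0)) a y1
  have hconsA : Consec (insert a (Y.erase y0)) a y1 := by
    have h := consec_min_second (V := insert a (Y.erase y0)) (by rw [hfminV, hVea]; exact hYe_ne)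
    rw [hfminV, hVea, ← hy1d] at h
    exact h
  have hpaircard : ∀ ρ ∈ level T a, ((level T y1).filter (fun τ => ρ <+: τ)).card = 2 :=
    fun ρ hρ => hT.2.2 a y1 hconsA ρ hρ
  have hlevMF : (level T (fmax Y)).Nonempty := by
    rw [← hfmaxV]
    exact hT.2.1 _ (fmax_mem ⟨a, Finset.mem_insert_self _ _⟩)
  have hy1V : y1 ∈ insert a (Y.erase y0) := Finset.mem_insert_of_mem hy1Ye
  have hy1MF : y1 ≤ fmax Y := le_fmax hy1Y
  have hstrlen : ∀ {t : List Bool}, y1 ≤ t.length → (str T a y0 y1 t).length = t.length :=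
    fun {t} ht => str_len haY h01 ht
  have htakeT : ∀ {t : List Bool}, t ∈ T → ∀ j, t.take j ∈ T :=
    fun {t} ht j => htree t ht _ (take_prefix j t)
  set U := (level T (fmax Y)).biUnion
    (fun t => (Finset.range (fmax Y + 1)).image (fun j => (str T a y0 y1 t).take j)) with hUdef
  have hstrMF : ∀ {t : List Bool}, t ∈ level T (fmax Y) → (str T a y0 y1 t).length = fmax Y := by
    intro t ht
    have hlen := (mem_level.1 ht).2
    rw [hstrlen (by omega : y1 ≤ t.length)]
    exact hlen
  have hUmem : ∀ {π : List Bool}, π ∈ U ↔ ∃ t ∈ level T (fmax Y), π <+: str T a y0 y1 t := by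
    intro π
    constructor
    · intro h
      rcases Finset.mem_biUnion.1 h with ⟨t, ht, him⟩
      rcases Finset.mem_image.1 him with ⟨j, _, rfl⟩
      exact ⟨t, ht, take_prefix _ _⟩
    · rintro ⟨t, ht, hpre⟩
      refine Finset.mem_biUnion.2 ⟨t, ht, Finset.mem_image.2 ⟨π.length, ?_, ?_⟩⟩
      · refine Finset.mem_range.2 ?_
        have h1 := hpre.length_le
        have h2 := hstrMF ht
        omega
      · exact (prefix_iff_eq_take.1 hpre).symm
  have hUnode : ∀ {π : List Bool}, π ∈ U → y1 ≤ π.length →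
      ∃ τ, τ ∈ T ∧ τ.length = π.length ∧ str T a y0 y1 τ = π := by
    intro π hπ hy1π
    rcases hUmem.1 hπ with ⟨t, ht, hpre⟩
    have htT := (mem_level.1 ht).1
    have htlen := (mem_level.1 ht).2
    have hstl := hstrMF ht
    have hπlen := hpre.length_le
    refine ⟨t.take π.length, htakeT htT _, ?_, ?_⟩
    · rw [List.length_take]; omega
    · rw [← str_take haY h01 hy1π (by omega)]
      exact (prefix_iff_eq_take.1 hpre).symm
  set uns : List Bool → List Bool := fun π =>
    if h : ∃ τ, τ ∈ T ∧ τ.length = π.length ∧ str T a y0 y1 τ = π then h.choose else []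
    with hunsdef
  have huns_spec : ∀ {π : List Bool},
      (∃ τ, τ ∈ T ∧ τ.length = π.length ∧ str T a y0 y1 τ = π) →
      uns π ∈ T ∧ (uns π).length = π.length ∧ str T a y0 y1 (uns π) = π := by
    intro π h
    rw [hunsdef]
    simp only [dif_pos h]
    exact h.choose_spec
  have hinj : ∀ {α β : List Bool}, α ∈ T → β ∈ T → α.length = β.length → y1 ≤ α.length →
      str T a y0 y1 α = str T a y0 y1 β → α = β := by
    intro α β hαT hβT hlen hy1α hstr
    apply str_inj haY h01 hlen hy1α ?_ ?_ ?_ hstr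
    · exact mem_level.2 ⟨htakeT hαT _, by rw [List.length_take]; omega⟩
    · exact mem_level.2 ⟨htakeT hβT _, by rw [List.length_take]; omega⟩
    · exact hpaircard _ (mem_level.2 ⟨htakeT hαT _, by rw [List.length_take]; omega⟩)
  have huns_str : ∀ {τ : List Bool}, τ ∈ T → y1 ≤ τ.length → uns (str T a y0 y1 τ) = τ := by
    intro τ hτ hy1τ
    have hex : ∃ τ', τ' ∈ T ∧ τ'.length = (str T a y0 y1 τ).length ∧
        str T a y0 y1 τ' = str T a y0 y1 τ := ⟨τ, hτ, (hstrlen hy1τ).symm, rfl⟩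
    obtain ⟨h1, h2, h3⟩ := huns_spec hex
    exact hinj h1 hτ (by rw [h2, hstrlen hy1τ]) (by rw [h2, hstrlen hy1τ]; exact hy1τ) h3
  have hUtree : IsTree U := by
    intro x hx π hπ
    rcases hUmem.1 hx with ⟨t, ht, hpre⟩
    exact hUmem.2 ⟨t, ht, hπ.trans hpre⟩
  have hUlev : ∀ y ∈ Y, (level U y).Nonempty := by
    intro y hy
    obtain ⟨t0, ht0⟩ := hlevMF
    have hyMF : y ≤ fmax Y := le_fmax hy
    refine ⟨(str T a y0 y1 t0).take y, mem_level.2 ⟨hUmem.2 ⟨t0, ht0, take_prefix _ _⟩, ?_⟩⟩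
    rw [List.length_take, hstrMF ht0]
    omega
  have hstr_memU : ∀ {τ : List Bool} {l : ℕ}, τ ∈ level T l → l ∈ insert a (Y.erase y0) →
      y1 ≤ l → str T a y0 y1 τ ∈ level U l := by
    intro τ l hτ hlV hy1l
    obtain ⟨tt, htt, hpre⟩ := ext_to_top hT l hlV τ hτ
    rw [hfmaxV] at htt
    have hτlen := (mem_level.1 hτ).2
    refine mem_level.2 ⟨hUmem.2 ⟨tt, htt, ?_⟩, by rw [hstrlen (by omega)]; exact hτlen⟩
    exact str_prefix haY h01 (by omega) hpre
  have hUbr : ∀ x z, Consec Y x z → ∀ σ ∈ level U x,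
      ((level U z).filter (fun τ => σ <+: τ)).card = 2 := by
    intro x z hcons σ hσ
    have hxY := hcons.1
    have hzY := hcons.2.1
    have hxz := hcons.2.2.1
    have hzMF : z ≤ fmax Y := le_fmax hzY
    have hσU := (mem_level.1 hσ).1
    have hσlen := (mem_level.1 hσ).2
    by_cases hx0 : x = y0
    · -- bottom branching pair (y0, y1)
      have hzy1 : z = y1 := by
        have hcons' : Consec Y (fmin Y) z := by rw [← hy0d, ← hx0]; exact hcons
        have h := consec_min_eq hcons'
        rw [← hy0d, ← hy1d] at h
        exact h
      rw [hzy1]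
      rcases hUmem.1 hσU with ⟨t, ht, hpre⟩
      have htT := (mem_level.1 ht).1
      have htlen := (mem_level.1 ht).2
      have hσeq : σ = (str T a y0 y1 t).take y0 := by
        have h1 := prefix_iff_eq_take.1 hpre
        rw [hσlen, hx0] at h1
        exact h1
      have hσ2 : σ = t.take a ++ List.replicate (y0 - a) false := by
        rw [hσeq, str_take_y0 haY h01 (by omega : y1 ≤ t.length)]
      have htaT : t.take a ∈ T := htakeT htT a
      have htalen : (t.take a).length = a := by rw [List.length_take]; omega
      have hρ : t.take a ∈ level T a := mem_level.2 ⟨htaT, htalen⟩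
      have hpc := hpaircard _ hρ
      have hσtakea : σ.take a = t.take a := by
        rw [hσ2, List.take_append,
          List.take_of_length_le (le_of_eq htalen), htalen, Nat.sub_self]
        simp
      have hset : (level U y1).filter (fun τ => σ <+: τ) =
          ((level T y1).filter (fun τ => t.take a <+: τ)).image (str T a y0 y1) := by
        ext w
        simp only [Finset.mem_filter, Finset.mem_image, mem_level]
        constructor
        · rintro ⟨⟨hwU, hwlen⟩, hσw⟩
          obtain ⟨τ, hτT, hτlen, hτstr⟩ := hUnode hwU (by omega)
          refine ⟨τ, ⟨⟨hτT, by omega⟩, ?_⟩, hτstr⟩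
          have h2 : w.take a = τ.take a := by
            rw [← hτstr, str_take_a haY h01 (by omega)]
          have h3 : σ.take a = w.take a := by
            have h4 := prefix_iff_eq_take.1 hσw
            rw [hσlen, hx0] at h4
            rw [h4, List.take_take, Nat.min_eq_left (by omega)]
          have h5 : τ.take a = t.take a := by rw [← h2, ← h3, hσtakea]
          rw [← h5]
          exact take_prefix _ _
        · rintro ⟨τ, ⟨⟨hτT, hτlen⟩, hρτ⟩, rfl⟩
          have hτmem := hstr_memU (mem_level.2 ⟨hτT, hτlen⟩) hy1V (by omega)
          refine ⟨⟨(mem_level.1 hτmem).1, (mem_level.1 hτmem).2⟩, ?_⟩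
          have hτa : τ.take a = t.take a := by
            have h6 := prefix_iff_eq_take.1 hρτ
            rw [htalen] at h6
            exact h6.symm
          have h7 : (str T a y0 y1 τ).take y0 = τ.take a ++ List.replicate (y0 - a) false :=
            str_take_y0 haY h01 (by omega)
          rw [hσ2, ← hτa, ← h7]
          exact take_prefix _ _
      have hinjOn : Set.InjOn (str T a y0 y1)
          ((level T y1).filter (fun τ => t.take a <+: τ)) := by
        intro α hα β hβ hstr
        have hα' := Finset.mem_filter.1 (Finset.mem_coe.1 hα)
        have hβ' := Finset.mem_filter.1 (Finset.mem_coe.1 hβ)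
        have hαlen := (mem_level.1 hα'.1).2
        have hβlen := (mem_level.1 hβ'.1).2
        exact hinj (mem_level.1 hα'.1).1 (mem_level.1 hβ'.1).1 (by omega) (by omega) hstr
      rw [hset, Finset.card_image_of_injOn hinjOn]
      exact hpc
    · -- high branching pair
      have hxgt : y0 < x := by
        have := hylow x hxY
        omega
      have hxE : x ∈ Y.erase y0 := Finset.mem_erase.2 ⟨by omega, hxY⟩
      have hy1x : y1 ≤ x := by rw [hy1d]; exact fmin_le hxE
      have hzE : z ∈ Y.erase y0 := Finset.mem_erase.2 ⟨by omega, hzY⟩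
      have hconsV : Consec (insert a (Y.erase y0)) x z := by
        apply consec_insert_low hVelem
        refine ⟨hxE, hzE, hxz, ?_⟩
        intro w hw
        exact hcons.2.2.2 w (Finset.mem_of_mem_erase hw)
      rcases hUmem.1 hσU with ⟨t, ht, hpre⟩
      have htT := (mem_level.1 ht).1
      have htlen := (mem_level.1 ht).2
      have hxMF : x ≤ fmax Y := le_fmax hxY
      have hσstr : σ = str T a y0 y1 (t.take x) := by
        have h1 := prefix_iff_eq_take.1 hpre
        rw [hσlen] at h1
        rw [h1, str_take haY h01 hy1x (by omega)]
      have hτσT : t.take x ∈ level T x :=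
        mem_level.2 ⟨htakeT htT x, by rw [List.length_take]; omega⟩
      have hset : (level U z).filter (fun τ => σ <+: τ) =
          ((level T z).filter (fun τ => t.take x <+: τ)).image (str T a y0 y1) := by
        ext w
        simp only [Finset.mem_filter, Finset.mem_image, mem_level]
        constructor
        · rintro ⟨⟨hwU, hwlen⟩, hσw⟩
          obtain ⟨τ, hτT, hτlen, hτstr⟩ := hUnode hwU (by omega)
          refine ⟨τ, ⟨⟨hτT, by omega⟩, ?_⟩, hτstr⟩
          have h1 : w.take x = σ := by
            have h2 := prefix_iff_eq_take.1 hσw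
            rw [hσlen] at h2
            exact h2.symm
          have h2 : str T a y0 y1 (τ.take x) = σ := by
            rw [← str_take haY h01 hy1x (by omega), hτstr, h1]
          have h3 : τ.take x = t.take x := by
            apply hinj (htakeT hτT x) (htakeT htT x) ?_ ?_ ?_
            · rw [List.length_take, List.length_take]; omega
            · rw [List.length_take]; omega
            · rw [h2, hσstr]
          rw [← h3]
          exact take_prefix _ _
        · rintro ⟨τ, ⟨⟨hτT, hτlen⟩, hρτ⟩, rfl⟩
          have hτmem := hstr_memU (mem_level.2 ⟨hτT, hτlen⟩)
            (Finset.mem_insert_of_mem hzE) (by omega)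
          refine ⟨⟨(mem_level.1 hτmem).1, (mem_level.1 hτmem).2⟩, ?_⟩
          rw [hσstr]
          exact str_prefix haY h01 (by rw [List.length_take]; omega) hρτ
      have hinjOn : Set.InjOn (str T a y0 y1)
          ((level T z).filter (fun τ => t.take x <+: τ)) := by
        intro α hα β hβ hstr
        have hα' := Finset.mem_filter.1 (Finset.mem_coe.1 hα)
        have hβ' := Finset.mem_filter.1 (Finset.mem_coe.1 hβ)
        have hαlen := (mem_level.1 hα'.1).2
        have hβlen := (mem_level.1 hβ'.1).2
        exact hinj (mem_level.1 hα'.1).1 (mem_level.1 hβ'.1).1 (by omega) (by omega) hstr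
      rw [hset, Finset.card_image_of_injOn hinjOn]
      exact hT.2.2 x z hconsV _ hτσT
  -- fire the clause on U
  have hCb : ∀ π ∈ level U (fmax Y), C (uns π) < k := by
    intro π hπ
    have hπU := (mem_level.1 hπ).1
    have hπlen := (mem_level.1 hπ).2
    obtain ⟨h1, h2, h3⟩ := huns_spec (hUnode hπU (by omega))
    have hmem : uns π ∈ level T (fmax (insert a (Y.erase y0))) := by
      rw [hfmaxV]
      exact mem_level.2 ⟨h1, by omega⟩
    exact hC _ hmem
  obtain ⟨c, hck, S, hSU, hSqs, hSleaf⟩ :=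
    hcl U ⟨hUtree, hUlev, hUbr⟩ (fun π => C (uns π)) hCb
  have hStree := hSqs.1
  have hMZle : fmax Z ≤ fmax Y := fmax_le_fmax hZY hZne
  have hy1MZ : y1 ≤ fmax Z := le_trans hy1z1 (le_fmax hz1Z)
  have hz0MZ : z0 ≤ fmax Z := le_fmax hz0Z
  have hSlevMZ : (level S (fmax Z)).Nonempty := hSqs.2.1 _ (fmax_mem hZne)
  have hSnode : ∀ {π : List Bool}, π ∈ S → y1 ≤ π.length →
      uns π ∈ T ∧ (uns π).length = π.length ∧ str T a y0 y1 (uns π) = π :=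
    fun {π} hπ h => huns_spec (hUnode (hSU hπ) h)
  have huns_take : ∀ {π : List Bool} {l : ℕ}, π ∈ U → y1 ≤ l → l ≤ π.length →
      (uns π).take l = uns (π.take l) := by
    intro π l hπ hy1l hlπ
    obtain ⟨h1, h2, h3⟩ := huns_spec (hUnode hπ (by omega))
    have h4 : str T a y0 y1 ((uns π).take l) = π.take l := by
      rw [← str_take (σ := uns π) haY h01 hy1l (by omega), h3]
    have h5 : uns (str T a y0 y1 ((uns π).take l)) = (uns π).take l :=
      huns_str (htakeT h1 l) (by rw [List.length_take]; omega)
    rw [h4] at h5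
    exact h5.symm
  have hcolor : ∀ {π : List Bool}, π ∈ level S (fmax Z) →
      ∃ τ' ∈ level T (fmax Y), uns π <+: τ' ∧ C τ' = c := by
    intro π hπ
    have hπS := (mem_level.1 hπ).1
    have hπlen := (mem_level.1 hπ).2
    obtain ⟨lf, hlf, hπlf⟩ := to_leaf hπS
    obtain ⟨pihat, hpihat, hlfpihat, hcc⟩ := hSleaf lf hlf
    have hpihatU := (mem_level.1 hpihat).1
    have hpihatlen := (mem_level.1 hpihat).2
    obtain ⟨h1, h2, h3⟩ := huns_spec (hUnode hpihatU (by omega))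
    refine ⟨uns pihat, mem_level.2 ⟨h1, by omega⟩, ?_, hcc⟩
    have hpipihat : π <+: pihat := hπlf.trans hlfpihat
    have h4 : pihat.take (fmax Z) = π := by
      have h5 := prefix_iff_eq_take.1 hpipihat
      rw [hπlen] at h5
      exact h5.symm
    have h5 : (uns pihat).take (fmax Z) = uns π := by
      rw [huns_take hpihatU (by omega) (by omega), h4]
    rw [← h5]
    exact take_prefix _ _
  set S' := (level S (fmax Z)).biUnion
    (fun π => (Finset.range (fmax Z + 1)).image (fun j => (uns π).take j)) with hS'def
  have hunslenMZ : ∀ {π : List Bool}, π ∈ level S (fmax Z) → (uns π).length = fmax Z := by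
    intro π hπ
    have h := (hSnode (mem_level.1 hπ).1 (by rw [(mem_level.1 hπ).2]; omega)).2.1
    rw [h, (mem_level.1 hπ).2]
  have hS'mem : ∀ {x : List Bool}, x ∈ S' ↔ ∃ π ∈ level S (fmax Z), x <+: uns π := by
    intro x
    constructor
    · intro h
      rcases Finset.mem_biUnion.1 h with ⟨π, hπ, him⟩
      rcases Finset.mem_image.1 him with ⟨j, _, rfl⟩
      exact ⟨π, hπ, take_prefix _ _⟩
    · rintro ⟨π, hπ, hpre⟩
      refine Finset.mem_biUnion.2 ⟨π, hπ, Finset.mem_image.2 ⟨x.length, ?_, ?_⟩⟩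
      · refine Finset.mem_range.2 ?_
        have h1 := hpre.length_le
        have h2 := hunslenMZ hπ
        omega
      · exact (prefix_iff_eq_take.1 hpre).symm
  have hS'T : S' ⊆ T := by
    intro x hx
    rcases hS'mem.1 hx with ⟨π, hπ, hpre⟩
    have h1 := (hSnode (mem_level.1 hπ).1 (by rw [(mem_level.1 hπ).2]; omega)).1
    exact htree _ h1 x hpre
  have hS'tree : IsTree S' := by
    intro x hx π hπ
    rcases hS'mem.1 hx with ⟨π1, hπ1, hpre⟩
    exact hS'mem.2 ⟨π1, hπ1, hπ.trans hpre⟩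
  have hcorr_to : ∀ {l : ℕ}, l ∈ Z → y1 ≤ l → ∀ {π' : List Bool}, π' ∈ level S l →
      uns π' ∈ level S' l := by
    intro l hlZ hy1l π' hπ'
    have hπ'S := (mem_level.1 hπ').1
    have hπ'len := (mem_level.1 hπ').2
    obtain ⟨π, hπ, hpre⟩ := ext_to_top hSqs l hlZ π' hπ'
    have hπS := (mem_level.1 hπ).1
    have hπlen := (mem_level.1 hπ).2
    have hll := hpre.length_le
    have h4 : π.take l = π' := by
      have h5 := prefix_iff_eq_take.1 hpre
      rw [hπ'len] at h5
      exact h5.symm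
    have h5 : (uns π).take l = uns π' := by
      rw [huns_take (hSU hπS) hy1l (by omega), h4]
    refine mem_level.2 ⟨hS'mem.2 ⟨π, hπ, ?_⟩, ?_⟩
    · rw [← h5]; exact take_prefix _ _
    · exact (hSnode hπ'S (by omega)).2.1.trans hπ'len
  have hcorr_fro : ∀ {l : ℕ}, y1 ≤ l → ∀ {x : List Bool}, x ∈ level S' l →
      ∃ π' ∈ level S l, x = uns π' := by
    intro l hy1l x hx
    obtain ⟨π, hπ, hpre⟩ := hS'mem.1 (mem_level.1 hx).1
    have hxlen := (mem_level.1 hx).2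
    have hπS := (mem_level.1 hπ).1
    have hπlen := (mem_level.1 hπ).2
    have hunl := hunslenMZ hπ
    have hll := hpre.length_le
    have h1 : x = (uns π).take l := by
      have h2 := prefix_iff_eq_take.1 hpre
      rw [hxlen] at h2
      exact h2
    have h2 : (uns π).take l = uns (π.take l) := huns_take (hSU hπS) hy1l (by omega)
    refine ⟨π.take l, mem_level.2 ⟨hStree π hπS _ (take_prefix _ _), ?_⟩, by rw [h1, h2]⟩
    rw [List.length_take]; omega
  have hpre_iff : ∀ {α β : List Bool}, α ∈ S → β ∈ S → y1 ≤ α.length → α.length ≤ β.length →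
      (uns α <+: uns β ↔ α <+: β) := by
    intro α β hα hβ hy1α hlen
    obtain ⟨ha1, ha2, ha3⟩ := hSnode hα (by omega)
    obtain ⟨hb1, hb2, hb3⟩ := hSnode hβ (by omega)
    constructor
    · intro h
      have h2 := str_prefix haY h01 (T := T) (by omega : y1 ≤ (uns α).length) h
      rwa [ha3, hb3] at h2
    · intro h
      have h4 : β.take α.length = α := (prefix_iff_eq_take.1 h).symm
      have h5 : (uns β).take α.length = uns α := by
        rw [huns_take (hSU hβ) (by omega) (by omega), h4]
      rw [← h5]
      exact take_prefix _ _
  have hunsinj : ∀ {α β : List Bool}, α ∈ S → β ∈ S → y1 ≤ α.length → y1 ≤ β.length →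
      uns α = uns β → α = β := by
    intro α β hα hβ h1 h2 h
    have h3 := (hSnode hα h1).2.2
    have h4 := (hSnode hβ h2).2.2
    rw [← h3, ← h4, h]
  have hbrHigh : ∀ x z, Consec Z x z → y1 ≤ x → ∀ σ' ∈ level S' x,
      ((level S' z).filter (fun τ => σ' <+: τ)).card = 2 := by
    intro x z hcons hy1x σ' hσ'
    obtain ⟨π', hπ', rfl⟩ := hcorr_fro hy1x hσ'
    have hπ'S := (mem_level.1 hπ').1
    have hπ'len := (mem_level.1 hπ').2
    have hzZ := hcons.2.1
    have hxzlt := hcons.2.2.1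
    have hy1z : y1 ≤ z := by omega
    have hset : (level S' z).filter (fun τ => uns π' <+: τ) =
        ((level S z).filter (fun τ => π' <+: τ)).image uns := by
      ext w
      simp only [Finset.mem_filter, Finset.mem_image]
      constructor
      · rintro ⟨hw, hπ'w⟩
        obtain ⟨π₁, hπ₁, rfl⟩ := hcorr_fro hy1z hw
        have hπ₁S := (mem_level.1 hπ₁).1
        have hπ₁len := (mem_level.1 hπ₁).2
        refine ⟨π₁, ⟨hπ₁, ?_⟩, rfl⟩
        exact (hpre_iff hπ'S hπ₁S (by omega) (by omega)).1 hπ'w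
      · rintro ⟨π₁, ⟨hπ₁, hππ₁⟩, rfl⟩
        have hπ₁S := (mem_level.1 hπ₁).1
        have hπ₁len := (mem_level.1 hπ₁).2
        exact ⟨hcorr_to hzZ hy1z hπ₁, (hpre_iff hπ'S hπ₁S (by omega) (by omega)).2 hππ₁⟩
    have hinjOn : Set.InjOn uns ((level S z).filter (fun τ => π' <+: τ)) := by
      intro α hα β hβ h
      have hα' := Finset.mem_filter.1 (Finset.mem_coe.1 hα)
      have hβ' := Finset.mem_filter.1 (Finset.mem_coe.1 hβ)
      exact hunsinj (mem_level.1 hα'.1).1 (mem_level.1 hβ'.1).1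
        (by rw [(mem_level.1 hα'.1).2]; omega) (by rw [(mem_level.1 hβ'.1).2]; omega) h
    rw [hset, Finset.card_image_of_injOn hinjOn]
    exact hSqs.2.2 x z hcons π' hπ'
  have hlevHigh : ∀ l ∈ Z, y1 ≤ l → (level S' l).Nonempty := by
    intro l hl hy1l
    obtain ⟨π', hπ'⟩ := hSqs.2.1 l hl
    exact ⟨uns π', hcorr_to hl hy1l hπ'⟩
  have hleafS' : ∀ x, IsLeaf S' x → ∃ τ' ∈ level T (fmax Y), x <+: τ' ∧ C τ' = c := by
    intro x hx
    obtain ⟨hxS', hxmax⟩ := hx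
    obtain ⟨π, hπ, hpre⟩ := hS'mem.1 hxS'
    have hunsmem : uns π ∈ S' := hS'mem.2 ⟨π, hπ, prefix_rfl⟩
    have hxuns : uns π = x := hxmax (uns π) hunsmem hpre
    obtain ⟨τ', hτ', hpre', hc'⟩ := hcolor hπ
    exact ⟨τ', hτ', by rw [← hxuns]; exact hpre', hc'⟩
  by_cases hz0y0 : z0 = y0
  · -- bottom mins coincide : S' works directly
    refine ⟨c, hck, S', hS'T, ⟨hS'tree, ?_, ?_⟩, ?_⟩
    · intro x hx
      rcases Finset.mem_insert.1 hx with rfl | hxE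
      · obtain ⟨π0, hπ0⟩ := hSlevMZ
        refine ⟨(uns π0).take x, mem_level.2 ⟨hS'mem.2 ⟨π0, hπ0, take_prefix _ _⟩, ?_⟩⟩
        rw [List.length_take, hunslenMZ hπ0]
        omega
      · have hxZ := Finset.mem_of_mem_erase hxE
        have hxgt : z0 < x := by
          rw [hz0d] at hxE ⊢
          exact lt_of_mem_erase_fmin hxE
        have hy1x : y1 ≤ x := by
          have h := fmin_le hxE
          rw [← hz1d] at h
          omega
        exact hlevHigh x hxZ hy1x
    · intro x z hc
      have habZ : ∀ b ∈ Z.erase z0, a < b := by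
        intro b hb
        have h1 := Finset.mem_of_mem_erase hb
        have h2 := hzlow b h1
        have h3 := Finset.ne_of_mem_erase hb
        omega
      rcases consec_insert_cases habZ hc with ⟨hxa, hz⟩ | hc'
      · have hzz1 : z = z1 := by rw [hz, ← hz1d]
        rw [hxa, hzz1]
        intro σ' hσ'
        obtain ⟨π, hπ, hpre⟩ := hS'mem.1 (mem_level.1 hσ').1
        have hσ'len := (mem_level.1 hσ').2
        have hπS := (mem_level.1 hπ).1
        have hπlen := (mem_level.1 hπ).2
        have hunl := hunslenMZ hπ
        have hll := hpre.length_le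
        obtain ⟨hn1, hn2, hn3⟩ := hSnode hπS (by omega)
        have hσ'eq : σ' = (uns π).take a := by
          have h := prefix_iff_eq_take.1 hpre
          rwa [hσ'len] at h
        have hνS : π.take y0 ∈ S := hStree π hπS _ (take_prefix _ _)
        have hνlen : (π.take y0).length = y0 := by rw [List.length_take]; omega
        have hνlev : π.take y0 ∈ level S z0 := mem_level.2 ⟨hνS, by rw [hνlen, hz0y0]⟩
        have hν2 : π.take y0 = σ' ++ List.replicate (y0 - a) false := by
          conv_lhs => rw [← hn3]
          rw [str_take_y0 haY h01 (by omega), ← hσ'eq]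
        have hσ'l : σ'.length = a := hσ'len
        have hconsZ : Consec Z z0 z1 := by
          have h := consec_min_second (V := Z) (by rw [← hz0d]; exact hZ2)
          rwa [← hz0d, ← hz1d] at h
        have hset : (level S' z1).filter (fun τ => σ' <+: τ) =
            ((level S z1).filter (fun τ => π.take y0 <+: τ)).image uns := by
          ext w
          simp only [Finset.mem_filter, Finset.mem_image]
          constructor
          · rintro ⟨hw, hσ'w⟩
            obtain ⟨π₁, hπ₁, rfl⟩ := hcorr_fro (by omega : y1 ≤ z1) hw
            have hπ₁S := (mem_level.1 hπ₁).1
            have hπ₁len := (mem_level.1 hπ₁).2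
            obtain ⟨hm1, hm2, hm3⟩ := hSnode hπ₁S (by omega)
            refine ⟨π₁, ⟨hπ₁, ?_⟩, rfl⟩
            have h1 : (uns π₁).take a = σ' := by
              have h2 := prefix_iff_eq_take.1 hσ'w
              rw [hσ'len] at h2
              exact h2.symm
            have h3 : π₁.take y0 = σ' ++ List.replicate (y0 - a) false := by
              conv_lhs => rw [← hm3]
              rw [str_take_y0 haY h01 (by omega), h1]
            have h4 : π₁.take y0 = π.take y0 := by rw [h3, hν2]
            rw [← h4]
            exact take_prefix _ _
          · rintro ⟨π₁, ⟨hπ₁, hνπ₁⟩, rfl⟩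
            have hπ₁S := (mem_level.1 hπ₁).1
            have hπ₁len := (mem_level.1 hπ₁).2
            obtain ⟨hm1, hm2, hm3⟩ := hSnode hπ₁S (by omega)
            refine ⟨hcorr_to (Finset.mem_of_mem_erase hz1E) (by omega) hπ₁, ?_⟩
            have h1 : π₁.take y0 = π.take y0 := by
              have h2 := prefix_iff_eq_take.1 hνπ₁
              rw [hνlen] at h2
              exact h2.symm
            have h3 : π₁.take a = σ' := by
              have h5 : π₁.take a = (π₁.take y0).take a := by
                rw [List.take_take, Nat.min_eq_left (by omega)]
              rw [h5, h1, hν2, List.take_append,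
                List.take_of_length_le (le_of_eq hσ'l), hσ'l, Nat.sub_self]
              simp
            have h4 : (uns π₁).take a = σ' := by
              rw [← str_take_a (T := T) haY h01 (by omega : y1 ≤ (uns π₁).length), hm3, h3]
            rw [← h4]
            exact take_prefix _ _
        have hinjOn2 : Set.InjOn uns ((level S z1).filter (fun τ => π.take y0 <+: τ)) := by
          intro α hα β hβ h
          have hα' := Finset.mem_filter.1 (Finset.mem_coe.1 hα)
          have hβ' := Finset.mem_filter.1 (Finset.mem_coe.1 hβ)
          exact hunsinj (mem_level.1 hα'.1).1 (mem_level.1 hβ'.1).1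
            (by rw [(mem_level.1 hα'.1).2]; omega) (by rw [(mem_level.1 hβ'.1).2]; omega) h
        rw [hset, Finset.card_image_of_injOn hinjOn2]
        exact hSqs.2.2 z0 z1 hconsZ _ hνlev
      · have hxE := hc'.1
        have hxZ := Finset.mem_of_mem_erase hxE
        have hy1x : y1 ≤ x := by
          have h := fmin_le hxE
          rw [← hz1d] at h
          omega
        have hcZ : Consec Z x z := by
          rw [hz0d] at hc'
          exact consec_erase_min hc'
        exact hbrHigh x z hcZ hy1x
    · intro σ hσ
      obtain ⟨τ', hτ', hp, hcc⟩ := hleafS' σ hσ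
      refine ⟨τ', ?_, hp, hcc⟩
      rw [hfmaxV]
      exact hτ'
  · -- bottom mins differ : prune S'
    have hz0gt : y0 < z0 := by omega
    have hz0E : z0 ∈ Y.erase y0 := by
      rw [hy0d]
      refine Finset.mem_erase.2 ⟨by rw [← hy0d]; omega, hz0Y⟩
    have hy1z0 : y1 ≤ z0 := by
      have h := fmin_le hz0E
      rw [← hy1d] at h
      exact h
    have hS'qsZ : QuasiStrong Z S' := by
      refine ⟨hS'tree, ?_, ?_⟩
      · intro l hl
        have := hzlow l hl
        exact hlevHigh l hl (by omega)
      · intro x z hc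
        have := hzlow x hc.1
        exact hbrHigh x z hc (by omega)
    obtain ⟨σ0', hσ0'⟩ := hS'qsZ.2.1 (fmin Z) (fmin_mem hZne)
    obtain ⟨hsub, hqs, hlv⟩ := pruneS (a := a) (by rw [← hz0d]; omega) hZne hS'qsZ hσ0'
    refine ⟨c, hck, Tsub S' σ0', hsub.trans hS'T, ?_, ?_⟩
    · rw [hz0d]
      exact hqs
    · intro σ hσ
      obtain ⟨τ', hτ', hp, hcc⟩ := hleafS' σ (hlv σ hσ)
      refine ⟨τ', ?_, hp, hcc⟩
      rw [hfmaxV]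
      exact hτ'

end StretchClause
section Assemble

lemma persistent_nonempty {d n k : ℕ} (hd : 1 ≤ d) (hn : 1 ≤ n) :
    ∀ (i : ℕ) {Y : Finset ℕ}, Persistent d n k i Y → Y.Nonempty
  | 0, Y, h => by
    obtain ⟨f, hf, _, heq⟩ := h
    obtain ⟨x, hx⟩ := omegaLarge_nonempty d (hf 0 (by omega))
    exact ⟨x, by rw [heq]; exact Finset.mem_biUnion.2 ⟨0, Finset.mem_range.2 (by omega), hx⟩⟩
  | (i+1), Y, h => by
    obtain ⟨Z, hZY, hp, _⟩ := h
    obtain ⟨x, hx⟩ := persistent_nonempty hd hn i hp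
    exact ⟨x, hZY hx⟩

lemma omegaLarge_zero_singleton : ∀ D : ℕ, OmegaLarge D ({0} : Finset ℕ)
  | 0 => ⟨0, Finset.mem_singleton_self 0⟩
  | (D+1) => by
    refine ⟨⟨0, Finset.mem_singleton_self 0⟩, fun _ => ∅, ?_, ?_, ?_, ?_⟩ <;>
      simp [fmin_singleton]

lemma omegaLarge_fmin_zero {d : ℕ} (hd : 1 ≤ d) {X : Finset ℕ} (h : OmegaLarge d X)
    (h0 : fmin X = 0) : X = {0} := by
  cases d with
  | zero => omega
  | succ e =>
    obtain ⟨hne, f, _, _, _, heq⟩ := h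
    rw [heq, h0]
    simp

lemma persistent_zero_singleton {D k : ℕ} : ∀ i, Persistent D 1 k i ({0} : Finset ℕ)
  | 0 => by
    show OmegaMulLarge D 1 ({0} : Finset ℕ)
    exact ⟨fun _ => {0}, fun m hm => omegaLarge_zero_singleton D,
      fun m hm => by omega, by simp⟩
  | (i+1) =>
    ⟨{0}, Finset.Subset.refl _, persistent_zero_singleton i,
      trivClause ⟨0, Finset.mem_singleton_self 0⟩ (Nat.zero_le _)⟩

lemma persistent_phi {d n k : ℕ} (hd : 1 ≤ d) (hn : 1 ≤ n) :
    ∀ (i : ℕ) {Y : Finset ℕ} {a : ℕ}, 0 < a → a ≤ fmin Y → Persistent d n k i Y →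
      Persistent d n k i (insert a (Y.erase (fmin Y)))
  | 0, Y, a, ha, haY, h => by
    rcases eq_or_lt_of_le haY with heq | hlt
    · have h0 : insert a (Y.erase (fmin Y)) = Y := by
        rw [heq]
        exact Finset.insert_erase (fmin_mem (persistent_nonempty hd hn 0 h))
      rw [h0]; exact h
    · show OmegaMulLarge d n (insert a (Y.erase (fmin Y)))
      exact omegaMul_phi hn ha hlt h
  | (i+1), Y, a, ha, haY, h => by
    obtain ⟨Z, hZY, hp, hcl⟩ := h
    have hZne : Z.Nonempty := persistent_nonempty hd hn i hp
    have hYne : Y.Nonempty := ⟨fmin Z, hZY (fmin_mem hZne)⟩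
    have haZ : a ≤ fmin Z := le_trans haY (fmin_le_fmin hZY hZne)
    refine ⟨insert a (Z.erase (fmin Z)), ?_, persistent_phi hd hn i ha haZ hp, ?_⟩
    · intro w hw
      rcases Finset.mem_insert.1 hw with rfl | hw'
      · exact Finset.mem_insert_self _ _
      · apply Finset.mem_insert_of_mem
        have h1 := Finset.mem_of_mem_erase hw'
        have h2 := Finset.ne_of_mem_erase hw'
        refine Finset.mem_erase.2 ⟨?_, hZY h1⟩
        intro hcon
        have h3 := fmin_le h1
        have h4 := fmin_le_fmin hZY hZne
        omega
    · rcases eq_or_lt_of_le haY with heqY | hltY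
      · have h0 : insert a (Y.erase (fmin Y)) = Y := by
          rw [heqY]; exact Finset.insert_erase (fmin_mem hYne)
        rw [h0]
        rcases eq_or_lt_of_le haZ with heqZ | hltZ
        · have h1 : insert a (Z.erase (fmin Z)) = Z := by
            rw [heqZ]; exact Finset.insert_erase (fmin_mem hZne)
          rw [h1]; exact hcl
        · exact clausePrune hZne hltZ hcl
      · by_cases hZ2 : (Z.erase (fmin Z)).Nonempty
        · exact stretch_clause rfl rfl rfl rfl hltY hZY hZ2 hcl
        · have h1 : Z.erase (fmin Z) = ∅ := Finset.not_nonempty_iff_eq_empty.1 hZ2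
          rw [h1]
          have h2 : insert a (∅ : Finset ℕ) = ({a} : Finset ℕ) := rfl
          rw [h2]
          apply trivClause
          · exact ⟨a, Finset.mem_insert_self _ _⟩
          · exact le_of_eq (fmin_insert (fun b hb =>
              le_of_lt (lt_trans hltY (lt_of_mem_erase_fmin hb)))).symm

end Assemble
/-- If `X` is `(ω^d·(min X + 1), k, i)`-persistent then it is `(ω^{d+1}, k, i)`-persistent. -/
theorem stmt13 (d k i : ℕ) (hd : 1 ≤ d) (hk : 1 ≤ k) (X : Finset ℕ)
    (h : Persistent d (fmin X + 1) k i X) :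
    Persistent (d+1) 1 k i X := by
  induction i generalizing X with
  | zero =>
    have h' : OmegaMulLarge d (fmin X + 1) X := h
    show OmegaMulLarge (d+1) 1 X
    rcases Nat.eq_zero_or_pos (fmin X) with h0 | hpos
    · have hX1 : OmegaLarge d X := by
        obtain ⟨f, hf, _, heq⟩ := h'
        rw [h0] at heq hf
        rw [heq]
        simpa using hf 0 (by omega)
      have hX0 : X = {0} := omegaLarge_fmin_zero hd hX1 h0
      rw [hX0]
      exact persistent_zero_singleton (k := k) 0
    · exact ⟨fun _ => X, fun m hm => omegaMul_to_succ hpos h', fun m hm => by omega, by simp⟩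
  | succ i IH =>
    obtain ⟨Y, hYX, hp, hcl⟩ := h
    have hYne : Y.Nonempty := persistent_nonempty hd (by omega) i hp
    have hXne : X.Nonempty := ⟨_, hYX (fmin_mem hYne)⟩
    rcases Nat.eq_zero_or_pos (fmin X) with h0 | hpos
    · refine ⟨{0}, ?_, persistent_zero_singleton i, ?_⟩
      · refine Finset.singleton_subset_iff.2 ?_
        rw [← h0]; exact fmin_mem hXne
      · exact trivClause hXne (Nat.zero_le _)
    · have haY : fmin X ≤ fmin Y := fmin_le_fmin hYX hYne
      have hWX : insert (fmin X) (Y.erase (fmin Y)) ⊆ X := by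
        intro w hw
        rcases Finset.mem_insert.1 hw with rfl | hw'
        · exact fmin_mem hXne
        · exact hYX (Finset.mem_of_mem_erase hw')
      have hfminW : fmin (insert (fmin X) (Y.erase (fmin Y))) = fmin X :=
        fmin_insert (fun b hb => by
          have := lt_of_mem_erase_fmin hb
          omega)
      have hWpers : Persistent d (fmin X + 1) k i (insert (fmin X) (Y.erase (fmin Y))) :=
        persistent_phi hd (by omega) i hpos haY hp
      refine ⟨insert (fmin X) (Y.erase (fmin Y)), hWX, ?_, ?_⟩
      · exact IH _ (by rw [hfminW]; exact hWpers)
      · rcases eq_or_lt_of_le haY with heq | hlt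
        · have h1 : insert (fmin X) (Y.erase (fmin Y)) = Y := by
            rw [heq]; exact Finset.insert_erase (fmin_mem hYne)
          rw [h1]; exact hcl
        · exact clausePrune hYne hlt hcl
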